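/- arXiv:0802.0248 — 3 statements merged into one kernel-verified Lean document; each statement's English description precedes it below -/
import Mathlib

section
/- Let h be a positive continuous function on (0,1) with h(t) → 0 as t → 0⁺. Let (r_n) be a sequence in (0,1) with ∑ h(1-r_n) < ∞. Let p, q > 0 be such that t ↦ h(t)/t^p is decreasing and t ↦ h(t)/t^(p-q) is increasing on (0,1). Then there exists C > 0 such that for all r ∈ (0,1), ∑_{n=1}^∞ (1-r_n)^p/(1-r·r_n)^q ≤ C / ((1-r)^(q-p) · h(1-r)). -/
open Set Filter Topology

theorem estimation_lemma_bigO (h : ℝ → ℝ) (r : ℕ → ℝ)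
    (hcont : ContinuousOn h (Ioo 0 1)) (hpos : ∀ t ∈ Ioo (0:ℝ) 1, 0 < h t)
    (hlim : Tendsto h (𝓝[>] 0) (𝓝 0))
    (hr : ∀ n, r n ∈ Ioo (0:ℝ) 1)
    (hsum : Summable fun n => h (1 - r n))
    (p q : ℝ) (hp : 0 < p) (hq : 0 < q)
    (hdec : AntitoneOn (fun t => h t / t ^ p) (Ioo 0 1))
    (hinc : MonotoneOn (fun t => h t / t ^ (p - q)) (Ioo 0 1)) :
    ∃ C > 0, ∀ s ∈ Ioo (0:ℝ) 1,
      (∑' n, (1 - r n) ^ p / (1 - s * r n) ^ q) ≤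
        C / ((1 - s) ^ (q - p) * h (1 - s)) := by
  have h0 : ∀ n, 0 < h (1 - r n) := fun n =>
    hpos _ ⟨by linarith [(hr n).2], by linarith [(hr n).1]⟩
  refine ⟨∑' n, h (1 - r n), Summable.tsum_pos hsum (fun n => (h0 n).le) 0 (h0 0), ?_⟩
  rintro s ⟨hs0, hs1⟩
  set b := 1 - s with hbdef
  have hb0 : (0:ℝ) < b := by simp only [hbdef]; linarith
  have hb1 : b < 1 := by simp only [hbdef]; linarith
  have hbmem : b ∈ Ioo (0:ℝ) 1 := ⟨hb0, hb1⟩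
  have hDpos : 0 < b ^ (q - p) * h b :=
    mul_pos (Real.rpow_pos_of_pos hb0 _) (hpos b hbmem)
  have key : ∀ n, (1 - r n) ^ p / (1 - s * r n) ^ q ≤
      h (1 - r n) / (b ^ (q - p) * h b) := by
    intro n
    obtain ⟨hr0, hr1⟩ := hr n
    set a := 1 - r n with hadef
    set m := 1 - s * r n with hmdef
    have ha0 : (0:ℝ) < a := by simp only [hadef]; linarith
    have ha1 : a < 1 := by simp only [hadef]; linarith
    have hm0 : (0:ℝ) < m := by simp only [hmdef]; nlinarith
    have hm1 : m < 1 := by simp only [hmdef]; nlinarith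
    have ham : a ≤ m := by simp only [hadef, hmdef]; nlinarith
    have hbm : b ≤ m := by simp only [hbdef, hmdef]; nlinarith
    have hmmem : m ∈ Ioo (0:ℝ) 1 := ⟨hm0, hm1⟩
    have h1 := hdec ⟨ha0, ha1⟩ hmmem ham
    have h2 := hinc hbmem hmmem hbm
    simp only at h1 h2
    have hap : 0 < a ^ p := Real.rpow_pos_of_pos ha0 _
    have hmp : 0 < m ^ p := Real.rpow_pos_of_pos hm0 _
    have hmq : 0 < m ^ q := Real.rpow_pos_of_pos hm0 _
    have e1 : h m * a ^ p ≤ h a * m ^ p := by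
      rw [div_le_div_iff₀ hmp hap] at h1
      linarith
    have h2' : h b * b ^ (q - p) ≤ h m * m ^ (q - p) := by
      rw [show q - p = -(p - q) by ring, Real.rpow_neg hb0.le,
        Real.rpow_neg hm0.le, ← div_eq_mul_inv, ← div_eq_mul_inv]
      exact h2
    rw [div_le_div_iff₀ hmq hDpos]
    calc a ^ p * (b ^ (q - p) * h b) = (h b * b ^ (q - p)) * a ^ p := by ring
      _ ≤ (h m * m ^ (q - p)) * a ^ p := by
          exact mul_le_mul_of_nonneg_right h2' hap.le
      _ = (h m * a ^ p) * m ^ (q - p) := by ring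
      _ ≤ (h a * m ^ p) * m ^ (q - p) := by
          exact mul_le_mul_of_nonneg_right e1 (Real.rpow_pos_of_pos hm0 _).le
      _ = h a * (m ^ p * m ^ (q - p)) := by ring
      _ = h a * m ^ q := by
          rw [← Real.rpow_add hm0, show p + (q - p) = q by ring]
  have hsum2 : Summable fun n => h (1 - r n) / (b ^ (q - p) * h b) :=
    hsum.div_const _
  have hsum1 : Summable fun n => (1 - r n) ^ p / (1 - s * r n) ^ q := by
    refine Summable.of_nonneg_of_le (fun n => ?_) key hsum2
    have h1 : (0:ℝ) ≤ 1 - r n := by linarith [(hr n).2]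
    have h2 : (0:ℝ) ≤ 1 - s * r n := by nlinarith [(hr n).1, (hr n).2]
    exact div_nonneg (Real.rpow_nonneg h1 _) (Real.rpow_nonneg h2 _)
  calc (∑' n, (1 - r n) ^ p / (1 - s * r n) ^ q)
      ≤ ∑' n, h (1 - r n) / (b ^ (q - p) * h b) := Summable.tsum_le_tsum key hsum1 hsum2
    _ = (∑' n, h (1 - r n)) / (b ^ (q - p) * h b) := tsum_div_const
end

section
/- Let h be a positive continuous function on (0,1) with h(t) → 0 as t → 0⁺, and (r_n) a sequence in (0,1) with ∑ h(1-r_n) < ∞. Let p, q > 0 with h(t)/t^p decreasing and h(t)/t^(p-q) increasing on (0,1), and additionally h(t)/t^(p-q) → 0 as t → 0⁺. Then (1-r)^(q-p) · h(1-r) · ∑_{n=1}^∞ (1-r_n)^p/(1-r·r_n)^q → 0 as r → 1⁻. -/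
open Set Filter Topology

theorem estimation_lemma_littleO (h : ℝ → ℝ) (r : ℕ → ℝ)
    (hcont : ContinuousOn h (Ioo 0 1)) (hpos : ∀ t ∈ Ioo (0:ℝ) 1, 0 < h t)
    (hlim : Tendsto h (𝓝[>] 0) (𝓝 0))
    (hr : ∀ n, r n ∈ Ioo (0:ℝ) 1)
    (hsum : Summable fun n => h (1 - r n))
    (p q : ℝ) (hp : 0 < p) (hq : 0 < q)
    (hdec : AntitoneOn (fun t => h t / t ^ p) (Ioo 0 1))
    (hinc : MonotoneOn (fun t => h t / t ^ (p - q)) (Ioo 0 1))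
    (hvan : Tendsto (fun t => h t / t ^ (p - q)) (𝓝[>] 0) (𝓝 0)) :
    Tendsto (fun s : ℝ =>
        (1 - s) ^ (q - p) * h (1 - s) * ∑' n, (1 - r n) ^ p / (1 - s * r n) ^ q)
      (𝓝[<] 1) (𝓝 0) := by
  have htn : ∀ n, (1 - r n) ∈ Ioo (0:ℝ) 1 := fun n =>
    ⟨by linarith [(hr n).2], by linarith [(hr n).1]⟩
  have hT : Tendsto (fun s : ℝ => 1 - s) (𝓝[<] (1:ℝ)) (𝓝[>] (0:ℝ)) := by
    apply tendsto_nhdsWithin_of_tendsto_nhds_of_eventually_within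
    · have h0 : Tendsto (fun s : ℝ => 1 - s) (𝓝 1) (𝓝 0) := by
        have hc : Continuous fun s : ℝ => 1 - s := continuous_const.sub continuous_id
        simpa using hc.tendsto 1
      exact h0.mono_left nhdsWithin_le_nhds
    · filter_upwards [self_mem_nhdsWithin] with s hs
      simp only [mem_Iio] at hs
      exact sub_pos.mpr hs
  have h2q1 : (1:ℝ) ≤ 2 ^ q := Real.one_le_rpow one_le_two hq.le
  have key : Tendsto (fun s : ℝ => ∑' n, (1 - s) ^ (q - p) * h (1 - s) *
      ((1 - r n) ^ p / (1 - s * r n) ^ q)) (𝓝[<] (1:ℝ)) (𝓝 (∑' _ : ℕ, (0:ℝ))) := by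
    apply tendsto_tsum_of_dominated_convergence (bound := fun n => 2 ^ q * h (1 - r n))
      (hsum.mul_left _)
    · intro n
      have h1 : Tendsto (fun s : ℝ => (1 - s) ^ (q - p) * h (1 - s)) (𝓝[<] (1:ℝ)) (𝓝 0) := by
        have hc := hvan.comp hT
        apply hc.congr'
        filter_upwards [self_mem_nhdsWithin] with s hs
        simp only [mem_Iio] at hs
        have hs1 : (0:ℝ) < 1 - s := sub_pos.mpr hs
        simp only [Function.comp_apply]
        rw [div_eq_mul_inv, ← Real.rpow_neg hs1.le, neg_sub, mul_comm]
      have h2 : Tendsto (fun s : ℝ => (1 - r n) ^ p / (1 - s * r n) ^ q) (𝓝[<] (1:ℝ))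
          (𝓝 ((1 - r n) ^ p / (1 - r n) ^ q)) := by
        apply Tendsto.div tendsto_const_nhds
        · have hb : Tendsto (fun s : ℝ => 1 - s * r n) (𝓝[<] (1:ℝ)) (𝓝 (1 - r n)) := by
            have hb0 : Tendsto (fun s : ℝ => 1 - s * r n) (𝓝 (1:ℝ)) (𝓝 (1 - r n)) := by
              have hc : Continuous fun s : ℝ => 1 - s * r n :=
                continuous_const.sub (continuous_id.mul continuous_const)
              simpa using hc.tendsto 1
            exact hb0.mono_left nhdsWithin_le_nhds
          exact hb.rpow_const (Or.inl (htn n).1.ne')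
        · exact (Real.rpow_pos_of_pos (htn n).1 q).ne'
      simpa using h1.mul h2
    · filter_upwards [Ioo_mem_nhdsLT
        (by norm_num : (1/2 : ℝ) < 1)] with s hs n
      have hs1 : (1/2 : ℝ) < s := hs.1
      have hs2 : s < 1 := hs.2
      have ht : (0:ℝ) < 1 - s := by linarith
      have ht2 : (1:ℝ) - s < 1 := by linarith
      have htnp := (htn n).1
      have htn2 := (htn n).2
      have hrn1 := (hr n).1
      have hrn2 := (hr n).2
      have hden : (0:ℝ) < 1 - s * r n := by nlinarith
      have hh : 0 < h (1 - s) := hpos _ ⟨ht, ht2⟩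
      have hhtn : 0 < h (1 - r n) := hpos _ (htn n)
      have hnn : 0 ≤ (1 - s) ^ (q - p) * h (1 - s) * ((1 - r n) ^ p / (1 - s * r n) ^ q) :=
        mul_nonneg (mul_nonneg (Real.rpow_nonneg ht.le _) hh.le)
          (div_nonneg (Real.rpow_nonneg htnp.le _) (Real.rpow_nonneg hden.le _))
      rw [Real.norm_eq_abs, abs_of_nonneg hnn]
      have e1 : ((1:ℝ) - s) ^ p ≠ 0 := (Real.rpow_pos_of_pos ht p).ne'
      have e2 : ((1:ℝ) - s) ^ q ≠ 0 := (Real.rpow_pos_of_pos ht q).ne'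
      have e3 : ((1:ℝ) - r n) ^ p ≠ 0 := (Real.rpow_pos_of_pos htnp p).ne'
      have e4 : ((1:ℝ) - r n) ^ q ≠ 0 := (Real.rpow_pos_of_pos htnp q).ne'
      have e5 : (2:ℝ) ^ q ≠ 0 := by positivity
      rcases le_or_gt (1 - r n) (1 - s) with hle | hlt
      · -- case 1 - r n ≤ 1 - s : bound by h (1 - r n)
        have hDq : (1 - s) ^ q ≤ (1 - s * r n) ^ q := by
          apply Real.rpow_le_rpow ht.le (by nlinarith) hq.le
        calc (1 - s) ^ (q - p) * h (1 - s) * ((1 - r n) ^ p / (1 - s * r n) ^ q)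
            ≤ (1 - s) ^ (q - p) * h (1 - s) * ((1 - r n) ^ p / (1 - s) ^ q) := by
              apply mul_le_mul_of_nonneg_left _
                (mul_nonneg (Real.rpow_nonneg ht.le _) hh.le)
              exact div_le_div_of_nonneg_left (Real.rpow_nonneg htnp.le _)
                (Real.rpow_pos_of_pos ht q) hDq
          _ = (h (1 - s) / (1 - s) ^ p) * (1 - r n) ^ p := by
              rw [Real.rpow_sub ht]
              field_simp
          _ ≤ (h (1 - r n) / (1 - r n) ^ p) * (1 - r n) ^ p := by
              apply mul_le_mul_of_nonneg_right _ (Real.rpow_nonneg htnp.le _)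
              exact hdec (htn n) ⟨ht, ht2⟩ hle
          _ = h (1 - r n) := div_mul_cancel₀ _ e3
          _ ≤ 2 ^ q * h (1 - r n) := le_mul_of_one_le_left hhtn.le h2q1
      · -- case 1 - s < 1 - r n : bound by 2^q * h (1 - r n)
        have hhalf : (1/2 : ℝ) * (1 - r n) ≤ 1 - s * r n := by nlinarith
        have hDq : ((1:ℝ)/2) ^ q * (1 - r n) ^ q ≤ (1 - s * r n) ^ q := by
          rw [← Real.mul_rpow (by norm_num) htnp.le]
          exact Real.rpow_le_rpow (by positivity) hhalf hq.le
        have hhalfq : ((1:ℝ)/2) ^ q = 1 / 2 ^ q := by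
          rw [Real.div_rpow zero_le_one (by norm_num : (0:ℝ) ≤ 2), Real.one_rpow]
        calc (1 - s) ^ (q - p) * h (1 - s) * ((1 - r n) ^ p / (1 - s * r n) ^ q)
            ≤ (1 - s) ^ (q - p) * h (1 - s) *
              ((1 - r n) ^ p / (((1:ℝ)/2) ^ q * (1 - r n) ^ q)) := by
              apply mul_le_mul_of_nonneg_left _
                (mul_nonneg (Real.rpow_nonneg ht.le _) hh.le)
              apply div_le_div_of_nonneg_left (Real.rpow_nonneg htnp.le _) _ hDq
              rw [hhalfq]; positivity
          _ = 2 ^ q * ((h (1 - s) / (1 - s) ^ (p - q)) * (1 - r n) ^ (p - q)) := by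
              rw [Real.rpow_sub ht, Real.rpow_sub ht, Real.rpow_sub htnp, hhalfq]
              field_simp
          _ ≤ 2 ^ q * ((h (1 - r n) / (1 - r n) ^ (p - q)) * (1 - r n) ^ (p - q)) := by
              apply mul_le_mul_of_nonneg_left _ (by positivity)
              apply mul_le_mul_of_nonneg_right _ (Real.rpow_nonneg htnp.le _)
              exact hinc ⟨ht, ht2⟩ (htn n) hlt.le
          _ = 2 ^ q * h (1 - r n) := by
              rw [div_mul_cancel₀ _ (Real.rpow_pos_of_pos htnp (p - q)).ne']
  rw [tsum_zero] at key
  exact key.congr fun s => tsum_mul_left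
end

section
/- Let B be a Blaschke product with zeros z_n = r_n e^{iθ_n} satisfying ∑ h(1-r_n) < ∞ for a positive continuous function h with h(t) → 0 as t → 0⁺. Suppose there is q ∈ (1/2, 1] such that h(t)/t^q is decreasing and h(t)/t^(1-q) is increasing on (0,1). Then for every p ≥ q, ∫_0^{2π} |B'(r e^{iθ})|^p dθ = O(1/((1-r)^(p-1) h(1-r))) as r → 1⁻. -/
open Set Filter Topology Complex Asymptotics

noncomputable def blaschkeProduct (z : ℕ → ℂ) : ℂ → ℂ := fun w =>
  ∏' n, (((‖z n‖ : ℝ) : ℂ) / z n) * ((z n - w) / (1 - (starRingEnd ℂ) (z n) * w))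

noncomputable def Complex.abs : AbsoluteValue ℂ ℝ where
  toFun x := ‖x‖
  map_mul' := norm_mul
  nonneg' := norm_nonneg
  eq_zero' _ := norm_eq_zero
  add_le' := norm_add_le

namespace Complex

@[simp] theorem norm_eq_abs (z : ℂ) : ‖z‖ = abs z := rfl

theorem abs_apply {z : ℂ} : abs z = Real.sqrt (normSq z) := norm_def z

theorem sq_abs (z : ℂ) : abs z ^ 2 = normSq z := Complex.sq_norm z

theorem normSq_eq_abs (x : ℂ) : normSq x = abs x ^ 2 := normSq_eq_norm_sq x

@[simp] theorem abs_ofReal (r : ℝ) : abs (r : ℂ) = |r| := by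
  change ‖(r : ℂ)‖ = |r|
  simp [-norm_eq_abs]

@[simp] theorem abs_conj (z : ℂ) : abs ((starRingEnd ℂ) z) = abs z := norm_conj z

@[simp] theorem abs_exp_ofReal_mul_I (x : ℝ) : abs (exp (x * I)) = 1 := norm_exp_ofReal_mul_I x

theorem abs_mul_exp_arg_mul_I (x : ℂ) : ↑(abs x) * exp (arg x * I) = x := norm_mul_exp_arg_mul_I x

@[continuity] theorem continuous_abs : Continuous abs := continuous_norm

end Complex

namespace BP
open Metric NNReal

variable {a w : ℂ}




noncomputable def bf (a w : ℂ) : ℂ :=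
  ((Complex.abs a : ℂ) / a) * ((a - w) / (1 - (starRingEnd ℂ) a * w))



lemma abs_denom_lb : 1 - Complex.abs a * Complex.abs w
    ≤ Complex.abs (1 - (starRingEnd ℂ) a * w) := by
  have h := Complex.abs.le_sub (1 : ℂ) ((starRingEnd ℂ) a * w)
  simpa [map_mul, Complex.abs_conj] using h

lemma denom_pos (ha : Complex.abs a < 1) (hw : Complex.abs w ≤ 1) :
    0 < 1 - Complex.abs a * Complex.abs w := by
  nlinarith [Complex.abs.nonneg a, Complex.abs.nonneg w]

lemma denom_ne (ha : Complex.abs a < 1) (hw : Complex.abs w ≤ 1) :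
    1 - (starRingEnd ℂ) a * w ≠ 0 := by
  intro h0
  have := abs_denom_lb (a := a) (w := w)
  rw [h0] at this
  simp at this
  nlinarith [denom_pos ha hw]

lemma abs_denom_pos (ha : Complex.abs a < 1) (hw : Complex.abs w ≤ 1) :
    0 < Complex.abs (1 - (starRingEnd ℂ) a * w) :=
  lt_of_lt_of_le (denom_pos ha hw) abs_denom_lb

lemma normSq_key : Complex.normSq (1 - (starRingEnd ℂ) a * w) - Complex.normSq (a - w)
    = (1 - Complex.normSq a) * (1 - Complex.normSq w) := by
  simp [Complex.normSq_apply, Complex.sub_re, Complex.sub_im, Complex.mul_re, Complex.mul_im]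
  ring

lemma abs_num_le_denom (ha : Complex.abs a < 1) (hw : Complex.abs w ≤ 1) :
    Complex.abs (a - w) ≤ Complex.abs (1 - (starRingEnd ℂ) a * w) := by
  have h1 : Complex.normSq a ≤ 1 := by
    rw [← Complex.sq_abs]; nlinarith [Complex.abs.nonneg a]
  have h2 : Complex.normSq w ≤ 1 := by
    rw [← Complex.sq_abs]; nlinarith [Complex.abs.nonneg w]
  have := normSq_key (a := a) (w := w)
  have hle : Complex.normSq (a - w) ≤ Complex.normSq (1 - (starRingEnd ℂ) a * w) := by
    nlinarith
  calc Complex.abs (a - w) = Real.sqrt (Complex.normSq (a - w)) := Complex.abs_apply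
    _ ≤ Real.sqrt (Complex.normSq (1 - (starRingEnd ℂ) a * w)) := Real.sqrt_le_sqrt hle
    _ = _ := Complex.abs_apply.symm

lemma abs_bf_le_one (ha : Complex.abs a < 1) (hw : Complex.abs w ≤ 1) :
    Complex.abs (bf a w) ≤ 1 := by
  rw [bf, map_mul, map_div₀, map_div₀]
  have h1 : Complex.abs ((Complex.abs a : ℂ)) / Complex.abs a ≤ 1 := by
    rw [Complex.abs_ofReal, _root_.abs_of_nonneg (Complex.abs.nonneg a)]
    exact div_self_le_one _
  have h2 : Complex.abs (a - w) / Complex.abs (1 - (starRingEnd ℂ) a * w) ≤ 1 := by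
    rw [div_le_one (abs_denom_pos ha hw)]
    exact abs_num_le_denom ha hw
  have := mul_le_one₀ h1 (by positivity) h2
  simpa using this





lemma conj_mul_self : (starRingEnd ℂ) a * a = ((Complex.abs a : ℂ))^2 := by
  rw [mul_comm, Complex.mul_conj, Complex.normSq_eq_abs]
  push_cast
  ring

lemma one_sub_bf_eq (ha0 : a ≠ 0) (hden : 1 - (starRingEnd ℂ) a * w ≠ 0) :
    1 - bf a w = ((1 - (Complex.abs a : ℂ)) * (a + (Complex.abs a : ℂ) * w)) /
      (a * (1 - (starRingEnd ℂ) a * w)) := by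
  rw [bf]
  rw [div_mul_div_comm, one_sub_div (mul_ne_zero ha0 hden)]
  congr 1
  linear_combination (-w) * conj_mul_self (a := a)

lemma abs_one_sub_bf_le (ha : Complex.abs a < 1) (ha0 : a ≠ 0) (hw : Complex.abs w < 1) :
    Complex.abs (1 - bf a w) ≤ 2 * (1 - Complex.abs a) / (1 - Complex.abs w) := by
  have hden : 1 - (starRingEnd ℂ) a * w ≠ 0 := by
    intro h0
    have h := Complex.abs.le_sub (1 : ℂ) ((starRingEnd ℂ) a * w)
    rw [h0] at h
    simp [map_mul, Complex.abs_conj] at h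
    nlinarith [Complex.abs.nonneg a, Complex.abs.nonneg w, Complex.abs.pos_iff.mpr ha0]
  rw [one_sub_bf_eq ha0 hden, map_div₀, map_mul, map_mul]
  have ha0' : 0 < Complex.abs a := Complex.abs.pos_iff.mpr ha0
  have hnum1 : Complex.abs (1 - (Complex.abs a : ℂ)) = 1 - Complex.abs a := by
    rw [← Complex.ofReal_one, ← Complex.ofReal_sub, Complex.abs_ofReal,
      _root_.abs_of_nonneg (by linarith)]
  have hnum2 : Complex.abs (a + (Complex.abs a : ℂ) * w) ≤ 2 * Complex.abs a := by
    calc Complex.abs (a + (Complex.abs a : ℂ) * w)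
        ≤ Complex.abs a + Complex.abs ((Complex.abs a : ℂ) * w) := Complex.abs.add_le _ _
      _ = Complex.abs a + Complex.abs a * Complex.abs w := by
          rw [map_mul, Complex.abs_ofReal, _root_.abs_of_nonneg (Complex.abs.nonneg a)]
      _ ≤ 2 * Complex.abs a := by nlinarith
  have hden2 : 1 - Complex.abs w ≤ Complex.abs (1 - (starRingEnd ℂ) a * w) := by
    have h := Complex.abs.le_sub (1 : ℂ) ((starRingEnd ℂ) a * w)
    simp only [map_one, map_mul, Complex.abs_conj] at h
    nlinarith [Complex.abs.nonneg a, Complex.abs.nonneg w]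
  have hdenpos : 0 < Complex.abs (1 - (starRingEnd ℂ) a * w) := by
    exact lt_of_lt_of_le (by linarith) hden2
  rw [hnum1, div_le_div_iff₀ (by positivity) (by linarith)]
  calc (1 - Complex.abs a) * Complex.abs (a + (Complex.abs a : ℂ) * w) * (1 - Complex.abs w)
      ≤ (1 - Complex.abs a) * (2 * Complex.abs a) * Complex.abs (1 - (starRingEnd ℂ) a * w) := by
        apply mul_le_mul
        · exact mul_le_mul_of_nonneg_left hnum2 (by linarith)
        · exact hden2
        · linarith
        · exact mul_nonneg (by linarith) (by positivity)
    _ = 2 * (1 - Complex.abs a) * (Complex.abs a * Complex.abs (1 - (starRingEnd ℂ) a * w)) := by ring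

lemma bf_hasDerivAt (hden : 1 - (starRingEnd ℂ) a * w ≠ 0) :
    HasDerivAt (bf a)
      (((Complex.abs a : ℂ) / a) * ((((Complex.abs a : ℂ))^2 - 1) / (1 - (starRingEnd ℂ) a * w)^2)) w := by
  have h1 : HasDerivAt (fun w : ℂ => a - w) (-1) w := by
    simpa using ((hasDerivAt_id w).const_sub a)
  have h2 : HasDerivAt (fun w : ℂ => 1 - (starRingEnd ℂ) a * w) (-(starRingEnd ℂ) a) w := by
    simpa using (((hasDerivAt_id w).const_mul ((starRingEnd ℂ) a)).const_sub 1)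
  have h3 := (h1.div h2 hden)
  have h4 := h3.const_mul ((Complex.abs a : ℂ) / a)
  have heq : (-1 * (1 - (starRingEnd ℂ) a * w) - (a - w) * -(starRingEnd ℂ) a)
      = ((Complex.abs a : ℂ)^2 - 1) := by
    linear_combination conj_mul_self (a := a)
  rw [heq] at h4
  exact h4

lemma prod_sub_one_le {f : ℕ → ℂ} {s : Finset ℕ} (hf : ∀ n ∈ s, Complex.abs (f n) ≤ 1) :
    Complex.abs (∏ n ∈ s, f n - 1) ≤ ∑ n ∈ s, Complex.abs (f n - 1) := by
  classical
  induction s using Finset.cons_induction with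
  | empty => simp
  | cons a s ha ih =>
    rw [Finset.prod_cons, Finset.sum_cons]
    have h1 : ∀ n ∈ s, Complex.abs (f n) ≤ 1 := fun n hn => hf n (Finset.mem_cons_of_mem hn)
    have h2 : Complex.abs (f a) ≤ 1 := hf a (Finset.mem_cons_self a s)
    have key : f a * ∏ n ∈ s, f n - 1 = f a * (∏ n ∈ s, f n - 1) + (f a - 1) := by ring
    rw [key]
    calc Complex.abs (f a * (∏ n ∈ s, f n - 1) + (f a - 1))
        ≤ Complex.abs (f a * (∏ n ∈ s, f n - 1)) + Complex.abs (f a - 1) := Complex.abs.add_le _ _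
      _ ≤ Complex.abs (∏ n ∈ s, f n - 1) + Complex.abs (f a - 1) := by
          rw [map_mul]
          have := Complex.abs.nonneg (∏ n ∈ s, f n - 1)
          nlinarith [Complex.abs.nonneg (f a)]
      _ ≤ (∑ n ∈ s, Complex.abs (f n - 1)) + Complex.abs (f a - 1) := by
          linarith [ih h1]
      _ = _ := by ring

lemma abs_prod_le_one {f : ℕ → ℂ} {s : Finset ℕ} (hf : ∀ n ∈ s, Complex.abs (f n) ≤ 1) :
    Complex.abs (∏ n ∈ s, f n) ≤ 1 := by
  rw [map_prod]
  exact Finset.prod_le_one (fun n _ => Complex.abs.nonneg _) hf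

lemma prod_diff_le {f : ℕ → ℂ} (hf : ∀ n, Complex.abs (f n) ≤ 1) {s t : Finset ℕ}
    (hst : s ⊆ t) :
    Complex.abs (∏ n ∈ t, f n - ∏ n ∈ s, f n) ≤ ∑ n ∈ t \ s, Complex.abs (f n - 1) := by
  classical
  rw [← Finset.prod_sdiff hst]
  have key : (∏ n ∈ t \ s, f n) * (∏ n ∈ s, f n) - ∏ n ∈ s, f n
      = (∏ n ∈ s, f n) * ((∏ n ∈ t \ s, f n) - 1) := by ring
  rw [key, map_mul]
  calc Complex.abs (∏ n ∈ s, f n) * Complex.abs ((∏ n ∈ t \ s, f n) - 1)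
      ≤ 1 * Complex.abs ((∏ n ∈ t \ s, f n) - 1) := by
        apply mul_le_mul_of_nonneg_right (abs_prod_le_one (fun n hn => hf n)) (Complex.abs.nonneg _)
    _ = Complex.abs ((∏ n ∈ t \ s, f n) - 1) := one_mul _
    _ ≤ _ := prod_sub_one_le (fun n _ => hf n)

/-- If all factors are bounded by 1 and `‖f n - 1‖` is summable, then `f` is multipliable. -/
lemma multipliable_of_summable {f : ℕ → ℂ} (hf : ∀ n, Complex.abs (f n) ≤ 1)
    (hs : Summable fun n => Complex.abs (f n - 1)) : Multipliable f := by
  classical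
  -- partial products form a Cauchy sequence
  have hcauchy : CauchySeq (fun N => ∏ n ∈ Finset.range N, f n) := by
    rw [Metric.cauchySeq_iff]
    intro ε hε
    obtain ⟨s₀, hs₀⟩ := summable_iff_vanishing.mp hs (Metric.ball 0 ε) (Metric.ball_mem_nhds 0 hε)
    obtain ⟨N₀, hN₀⟩ := Finset.exists_nat_subset_range s₀
    refine ⟨N₀, fun M hM N hN => ?_⟩
    wlog hNM : N ≤ M generalizing M N
    · rw [dist_comm]; exact this N hN M hM (le_of_not_ge hNM)
    have hsub : Finset.range N ⊆ Finset.range M := Finset.range_subset_range.2 hNM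
    rw [dist_eq_norm]
    have hb := prod_diff_le hf hsub
    have hdisj : Disjoint (Finset.range M \ Finset.range N) s₀ := by
      refine Finset.disjoint_left.2 fun x hx hxs => ?_
      have := hN₀ hxs
      rw [Finset.mem_sdiff, Finset.mem_range, Finset.mem_range] at *
      omega
    have := hs₀ _ hdisj
    rw [Metric.mem_ball, dist_zero_right, Real.norm_eq_abs] at this
    have habs : ∑ n ∈ Finset.range M \ Finset.range N, Complex.abs (f n - 1) < ε := by
      have hnn : 0 ≤ ∑ n ∈ Finset.range M \ Finset.range N, Complex.abs (f n - 1) :=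
        Finset.sum_nonneg fun n _ => Complex.abs.nonneg _
      rwa [_root_.abs_of_nonneg hnn] at this
    calc ‖∏ n ∈ Finset.range M, f n - ∏ n ∈ Finset.range N, f n‖
        = Complex.abs (∏ n ∈ Finset.range M, f n - ∏ n ∈ Finset.range N, f n) := rfl
      _ ≤ ∑ n ∈ Finset.range M \ Finset.range N, Complex.abs (f n - 1) := hb
      _ < ε := habs
  obtain ⟨L, hL⟩ := cauchySeq_tendsto_of_complete hcauchy
  refine ⟨L, ?_⟩
  -- now show HasProd f L
  show Tendsto (fun s : Finset ℕ => ∏ b ∈ s, f b) atTop (𝓝 L)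
  rw [Metric.tendsto_atTop]
  intro ε hε
  obtain ⟨s₀, hs₀⟩ := summable_iff_vanishing.mp hs (Metric.ball 0 (ε/3))
    (Metric.ball_mem_nhds 0 (by linarith))
  obtain ⟨N₀, hN₀⟩ := Finset.exists_nat_subset_range s₀
  have htail : ∀ t : Finset ℕ, Disjoint t (Finset.range N₀) →
      ∑ n ∈ t, Complex.abs (f n - 1) < ε/3 := by
    intro t ht
    have hdisj : Disjoint t s₀ := ht.mono_right hN₀
    have := hs₀ t hdisj
    rw [Metric.mem_ball, dist_zero_right, Real.norm_eq_abs] at this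
    have hnn : 0 ≤ ∑ n ∈ t, Complex.abs (f n - 1) :=
      Finset.sum_nonneg fun n _ => Complex.abs.nonneg _
    rwa [_root_.abs_of_nonneg hnn] at this
  -- |L - P N₀| ≤ ε/3
  have hLP : dist L (∏ n ∈ Finset.range N₀, f n) ≤ ε/3 := by
    have hev : ∀ᶠ M in atTop, dist (∏ n ∈ Finset.range M, f n) (∏ n ∈ Finset.range N₀, f n) ≤ ε/3 := by
      filter_upwards [eventually_ge_atTop N₀] with M hM
      rw [dist_eq_norm]
      have hb := prod_diff_le hf (Finset.range_subset_range.2 hM)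
      refine le_trans hb (le_of_lt (htail _ ?_))
      refine Finset.disjoint_left.2 fun x hx hxs => ?_
      rw [Finset.mem_sdiff] at hx
      exact hx.2 hxs
    have := le_of_tendsto (hL.dist tendsto_const_nhds) hev
    exact this
  refine ⟨Finset.range N₀, fun s hs' => ?_⟩
  have hb := prod_diff_le hf hs'
  have hd : dist (∏ n ∈ s, f n) (∏ n ∈ Finset.range N₀, f n) ≤ ε/3 := by
    rw [dist_eq_norm]
    refine le_trans hb (le_of_lt (htail _ ?_))
    refine Finset.disjoint_left.2 fun x hx hxs => ?_
    rw [Finset.mem_sdiff] at hx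
    exact hx.2 hxs
  calc dist (∏ n ∈ s, f n) L ≤ dist (∏ n ∈ s, f n) (∏ n ∈ Finset.range N₀, f n)
        + dist (∏ n ∈ Finset.range N₀, f n) L := dist_triangle _ _ _
    _ ≤ ε/3 + ε/3 := by rw [dist_comm (∏ n ∈ Finset.range N₀, f n) L]; linarith
    _ < ε := by linarith



noncomputable def G (ρ : ℝ) (e : ℝ) (θ : ℝ) : ℝ :=
  (Complex.abs (1 - (ρ:ℂ) * Complex.exp (θ * Complex.I))) ^ e

lemma G_base_lb {ρ : ℝ} (hρ0 : 0 ≤ ρ) (θ : ℝ) :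
    1 - ρ ≤ Complex.abs (1 - (ρ:ℂ) * Complex.exp (θ * Complex.I)) := by
  have h := Complex.abs.le_sub (1 : ℂ) ((ρ:ℂ) * Complex.exp (θ * Complex.I))
  rw [map_one, map_mul, Complex.abs_ofReal, Complex.abs_exp_ofReal_mul_I,
    _root_.abs_of_nonneg hρ0] at h
  simpa using h

lemma G_base_pos {ρ : ℝ} (hρ0 : 0 ≤ ρ) (hρ1 : ρ < 1) (θ : ℝ) :
    0 < Complex.abs (1 - (ρ:ℂ) * Complex.exp (θ * Complex.I)) :=
  lt_of_lt_of_le (by linarith) (G_base_lb hρ0 θ)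

lemma G_continuous {ρ : ℝ} (hρ0 : 0 ≤ ρ) (hρ1 : ρ < 1) (e : ℝ) : Continuous (G ρ e) := by
  rw [continuous_iff_continuousAt]
  intro θ
  have hbase : Continuous fun θ : ℝ => Complex.abs (1 - (ρ:ℂ) * Complex.exp (θ * Complex.I)) := by
    continuity
  exact hbase.continuousAt.rpow_const (Or.inl (ne_of_gt (G_base_pos hρ0 hρ1 θ)))

lemma G_intable {ρ : ℝ} (hρ0 : 0 ≤ ρ) (hρ1 : ρ < 1) (e a b : ℝ) :
    IntervalIntegrable (G ρ e) MeasureTheory.volume a b :=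
  (G_continuous hρ0 hρ1 e).intervalIntegrable a b

lemma normSq_eval (ρ θ : ℝ) :
    (Complex.abs (1 - (ρ:ℂ) * Complex.exp (θ * Complex.I)))^2
      = 1 - 2*ρ*Real.cos θ + ρ^2 := by
  rw [Complex.sq_abs, Complex.normSq_apply]
  have hre : (1 - (ρ:ℂ) * Complex.exp (θ * Complex.I)).re = 1 - ρ * Real.cos θ := by
    simp [Complex.sub_re, Complex.mul_re, Complex.exp_ofReal_mul_I_re,
      Complex.exp_ofReal_mul_I_im]
  have him : (1 - (ρ:ℂ) * Complex.exp (θ * Complex.I)).im = -(ρ * Real.sin θ) := by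
    simp [Complex.sub_im, Complex.mul_im, Complex.exp_ofReal_mul_I_re,
      Complex.exp_ofReal_mul_I_im]
  rw [hre, him]
  have := Real.sin_sq_add_cos_sq θ
  nlinarith [this]

lemma one_sub_cos_lb {θ : ℝ} (h0 : 0 ≤ θ) (hπ : θ ≤ Real.pi) :
    θ^2/5 ≤ 1 - Real.cos θ := by
  have h1 : Real.sin (θ/2)^2 = (1 - Real.cos θ)/2 := by
    have hc : Real.cos (θ/2)^2 = 1/2 + Real.cos θ / 2 := by
      have := Real.cos_sq (θ/2)
      rwa [show 2*(θ/2) = θ by ring] at this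
    have hs := Real.sin_sq_add_cos_sq (θ/2)
    linarith
  have h2 : θ/Real.pi ≤ Real.sin (θ/2) := by
    have := Real.mul_le_sin (x := θ/2) (by linarith) (by linarith)
    calc θ/Real.pi = 2/Real.pi * (θ/2) := by ring
      _ ≤ Real.sin (θ/2) := this
  have h3 : 0 ≤ θ/Real.pi := by positivity
  have h4 : (θ/Real.pi)^2 ≤ Real.sin (θ/2)^2 := by nlinarith
  have hπ2 : Real.pi^2 ≤ 10 := by nlinarith [Real.pi_lt_d2, Real.pi_gt_three]
  have hπpos := Real.pi_pos
  rw [div_pow] at h4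
  have h5 : θ^2/10 ≤ θ^2/Real.pi^2 := by
    apply div_le_div_of_nonneg_left (by positivity) (by positivity) hπ2
  nlinarith

lemma sq_lb {ρ θ : ℝ} (hρ : 1/2 ≤ ρ) (hρ1 : ρ < 1) (h0 : 0 ≤ θ) (hπ : θ ≤ Real.pi) :
    θ^2/5 ≤ (Complex.abs (1 - (ρ:ℂ) * Complex.exp (θ * Complex.I)))^2 := by
  rw [normSq_eval]
  have h1 := one_sub_cos_lb h0 hπ
  nlinarith

lemma G_le_const {ρ : ℝ} (hρ0 : 0 ≤ ρ) (hρ1 : ρ < 1) {q : ℝ} (hq : 0 < q) (θ : ℝ) :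
    G ρ (-(2*q)) θ ≤ (1-ρ) ^ (-(2*q)) := by
  rw [G]
  exact Real.rpow_le_rpow_of_nonpos (by linarith) (G_base_lb hρ0 θ) (by linarith)

lemma G_le_theta {ρ : ℝ} (hρ : 1/2 ≤ ρ) (hρ1 : ρ < 1) {q : ℝ} (hq1 : 1/2 < q) (hq2 : q ≤ 1)
    {θ : ℝ} (h0 : 0 < θ) (hπ : θ ≤ Real.pi) :
    G ρ (-(2*q)) θ ≤ 5 * θ ^ (-(2*q)) := by
  set A := Complex.abs (1 - (ρ:ℂ) * Complex.exp (θ * Complex.I)) with hA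
  have hApos : 0 < A := G_base_pos (by linarith) hρ1 θ
  have hq0 : 0 < q := by linarith
  have key : A ^ (-(2*q)) = (A^2) ^ (-q) := by
    rw [← Real.rpow_natCast_mul hApos.le 2 (-q)]
    norm_num
  have key2 : θ ^ (-(2*q)) = (θ^2) ^ (-q) := by
    rw [← Real.rpow_natCast_mul h0.le 2 (-q)]
    norm_num
  rw [G, ← hA, key, key2]
  have hsq := sq_lb hρ hρ1 h0.le hπ
  have h1 : (A^2)^(-q) ≤ (θ^2/5)^(-q) :=
    Real.rpow_le_rpow_of_nonpos (by positivity) hsq (by linarith)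
  have h2 : (θ^2/5)^(-q) = (θ^2)^(-q) * 5^q := by
    rw [Real.div_rpow (by positivity) (by norm_num)]
    rw [Real.rpow_neg (by norm_num : (0:ℝ) ≤ 5)]
    field_simp
  have h3 : (5:ℝ)^q ≤ 5 := by
    calc (5:ℝ)^q ≤ (5:ℝ)^(1:ℝ) := Real.rpow_le_rpow_of_exponent_le (by norm_num) hq2
      _ = 5 := Real.rpow_one 5
  calc (A^2)^(-q) ≤ (θ^2)^(-q) * 5^q := by rw [← h2]; exact h1
    _ ≤ (θ^2)^(-q) * 5 := by
        apply mul_le_mul_of_nonneg_left h3 (Real.rpow_nonneg (by positivity) _)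
    _ = 5 * (θ^2)^(-q) := by ring

lemma integral_theta_rpow {d : ℝ} (hd : 0 < d) (hdπ : d ≤ Real.pi) {q : ℝ} (hq1 : 1/2 < q) :
    ∫ θ in d..Real.pi, θ ^ (-(2*q)) ≤ d ^ (1-2*q) / (2*q-1) := by
  have hne : -(2*q) ≠ -1 := by intro h; nlinarith [neg_injective h]
  have h0 : (0:ℝ) ∉ Set.uIcc d Real.pi := by
    rw [Set.uIcc_of_le hdπ]
    intro h
    exact absurd (mem_Icc.mp h).1 (by linarith)
  rw [integral_rpow (Or.inr ⟨hne, h0⟩)]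
  have hπpos := Real.pi_pos
  have h1 : -(2*q) + 1 = -(2*q-1) := by ring
  have h2 : (0:ℝ) < Real.pi ^ (-(2*q) + 1) := Real.rpow_pos_of_pos hπpos _
  have h3 : d ^ (-(2*q) + 1) = d ^ (1 - 2*q) := by norm_num; ring_nf
  have h4 : (Real.pi ^ (-(2*q)+1) - d ^ (-(2*q)+1)) / (-(2*q)+1)
      = (d ^ (-(2*q)+1) - Real.pi ^ (-(2*q)+1)) / (2*q-1) := by
    rw [div_eq_div_iff (by linarith) (by linarith)]
    ring
  rw [h4, h3]
  apply div_le_div_of_nonneg_right _ (by linarith)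
  · linarith
  -- leftover?


noncomputable def Cq (q : ℝ) : ℝ := 4*Real.pi + 2 + 10/(2*q-1)

lemma G_even {ρ : ℝ} (e θ : ℝ) : G ρ e (-θ) = G ρ e θ := by
  rw [G, G]
  congr 1
  have h1 : Complex.exp ((-θ:ℝ) * Complex.I) = (starRingEnd ℂ) (Complex.exp (θ * Complex.I)) := by
    rw [← Complex.exp_conj]
    congr 1
    simp [Complex.conj_I]
  rw [h1, ← Complex.abs_conj (1 - (ρ:ℂ) * (starRingEnd ℂ) (Complex.exp ((θ:ℝ) * Complex.I)))]
  congr 1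
  rw [map_sub, map_mul]
  simp [Complex.conj_ofReal]

lemma G_periodic {ρ : ℝ} (e : ℝ) : Function.Periodic (G ρ e) (2*Real.pi) := by
  intro θ
  rw [G, G]
  congr 3
  push_cast
  rw [add_mul, Complex.exp_add]
  have : Complex.exp ((2*Real.pi : ℝ) * Complex.I) = 1 := by
    push_cast
    exact Complex.exp_two_pi_mul_I
  push_cast at this
  rw [this, mul_one]

lemma integral_G_symm_interval {ρ : ℝ} (hρ0 : 0 ≤ ρ) (hρ1 : ρ < 1) {q : ℝ}
    (hq1 : 1/2 < q) (hq2 : q ≤ 1) :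
    ∫ θ in (-Real.pi)..Real.pi, G ρ (-(2*q)) θ ≤ Cq q * (1-ρ) ^ (1-2*q) := by
  have hπ := Real.pi_pos
  have hq0 : (0:ℝ) < q := by linarith
  have hd0 : 0 < 1 - ρ := by linarith
  have hCq : 0 < 2*q - 1 := by linarith
  have hGint := G_intable hρ0 hρ1 (-(2*q))
  by_cases hcase : ρ < 1/2
  · -- constant bound
    have hconst : ∀ θ ∈ Set.Icc (-Real.pi) Real.pi, G ρ (-(2*q)) θ ≤ (1-ρ)^(-(2*q)) :=
      fun θ _ => G_le_const hρ0 hρ1 hq0 θ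
    have h1 : ∫ θ in (-Real.pi)..Real.pi, G ρ (-(2*q)) θ
        ≤ ∫ θ in (-Real.pi)..Real.pi, (1-ρ)^(-(2*q)) := by
      apply intervalIntegral.integral_mono_on (by linarith) (hGint _ _)
        (intervalIntegrable_const) hconst
    rw [intervalIntegral.integral_const, smul_eq_mul] at h1
    have h2 : (1-ρ)^(-(2*q)) ≤ 2 * (1-ρ)^(1-2*q) := by
      have hinv : (1-ρ)⁻¹ ≤ 2 := by
        rw [inv_le_comm₀ hd0 (by norm_num)]
        linarith
      have : (1-ρ)^(-(2*q)) = (1-ρ)^(1-2*q) * (1-ρ)⁻¹ := by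
        rw [← Real.rpow_neg_one (1-ρ), ← Real.rpow_add hd0]
        ring_nf
      rw [this]
      calc (1-ρ)^(1-2*q) * (1-ρ)⁻¹ ≤ (1-ρ)^(1-2*q) * 2 :=
            mul_le_mul_of_nonneg_left hinv (Real.rpow_nonneg hd0.le _)
        _ = 2 * (1-ρ)^(1-2*q) := by ring
    calc ∫ θ in (-Real.pi)..Real.pi, G ρ (-(2*q)) θ
        ≤ (Real.pi - (-Real.pi)) * (1-ρ)^(-(2*q)) := h1
      _ ≤ (2*Real.pi) * (2 * (1-ρ)^(1-2*q)) := by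
          have : Real.pi - (-Real.pi) = 2*Real.pi := by ring
          rw [this]
          exact mul_le_mul_of_nonneg_left h2 (by linarith)
      _ ≤ Cq q * (1-ρ)^(1-2*q) := by
          rw [Cq]
          have hpow : 0 ≤ (1-ρ)^(1-2*q) := Real.rpow_nonneg hd0.le _
          nlinarith [div_nonneg (by norm_num : (0:ℝ) ≤ 10) hCq.le]
  · -- ρ ≥ 1/2
    push_neg at hcase
    set d := 1 - ρ with hddef
    have hd12 : d ≤ 1/2 := by rw [hddef]; linarith
    have hdπ : d ≤ Real.pi := by linarith [Real.pi_gt_three]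
    -- split the integral
    have hsplit : ∫ θ in (-Real.pi)..Real.pi, G ρ (-(2*q)) θ
        = (∫ θ in (-Real.pi)..(-d), G ρ (-(2*q)) θ) + (∫ θ in (-d)..d, G ρ (-(2*q)) θ)
          + ∫ θ in d..Real.pi, G ρ (-(2*q)) θ := by
      rw [intervalIntegral.integral_add_adjacent_intervals (hGint _ _) (hGint _ _),
        intervalIntegral.integral_add_adjacent_intervals (hGint _ _) (hGint _ _)]
    -- middle piece
    have hmid : ∫ θ in (-d)..d, G ρ (-(2*q)) θ ≤ 2 * d^(1-2*q) := by
      have h1 : ∫ θ in (-d)..d, G ρ (-(2*q)) θ ≤ ∫ θ in (-d)..d, d^(-(2*q)) := by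
        apply intervalIntegral.integral_mono_on (by linarith) (hGint _ _)
          intervalIntegrable_const
        exact fun θ _ => G_le_const hρ0 hρ1 hq0 θ
      rw [intervalIntegral.integral_const, smul_eq_mul] at h1
      have h2 : (d - -d) * d^(-(2*q)) = 2 * d^(1-2*q) := by
        rw [show (1-2*q) = 1 + -(2*q) by ring, Real.rpow_add hd0, Real.rpow_one]
        ring
      linarith
    -- right piece
    have hright : ∫ θ in d..Real.pi, G ρ (-(2*q)) θ ≤ 5 * (d^(1-2*q)/(2*q-1)) := by
      have hcont5 : ContinuousOn (fun θ : ℝ => 5 * θ^(-(2*q))) (Set.uIcc d Real.pi) := by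
        intro x hx
        rw [Set.uIcc_of_le hdπ] at hx
        have hx0 : x ≠ 0 := by have := hx.1; intro h; rw [h] at this; linarith
        have hca : ContinuousAt (fun θ:ℝ => θ ^ (-(2*q))) x :=
          Real.continuousAt_rpow_const x _ (Or.inl hx0)
        exact (continuousAt_const.mul hca).continuousWithinAt
      have h1 : ∫ θ in d..Real.pi, G ρ (-(2*q)) θ ≤ ∫ θ in d..Real.pi, 5 * θ^(-(2*q)) := by
        apply intervalIntegral.integral_mono_on hdπ (hGint _ _)
          (hcont5.intervalIntegrable)
        intro θ hθ
        exact G_le_theta hcase hρ1 hq1 hq2 (lt_of_lt_of_le hd0 hθ.1) hθ.2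
      have h2 : ∫ θ in d..Real.pi, 5 * θ^(-(2*q)) = 5 * ∫ θ in d..Real.pi, θ^(-(2*q)) := by
        exact intervalIntegral.integral_const_mul 5 _
      rw [h2] at h1
      have h3 := integral_theta_rpow hd0 hdπ hq1
      nlinarith
    -- left piece
    have hleft : ∫ θ in (-Real.pi)..(-d), G ρ (-(2*q)) θ ≤ 5 * (d^(1-2*q)/(2*q-1)) := by
      have heq : ∫ θ in (-Real.pi)..(-d), G ρ (-(2*q)) θ = ∫ θ in d..Real.pi, G ρ (-(2*q)) θ := by
        calc ∫ θ in (-Real.pi)..(-d), G ρ (-(2*q)) θ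
            = ∫ θ in d..Real.pi, G ρ (-(2*q)) (-θ) :=
              (intervalIntegral.integral_comp_neg (a := d) (b := Real.pi) (G ρ (-(2*q)))).symm
          _ = ∫ θ in d..Real.pi, G ρ (-(2*q)) θ := by
              apply intervalIntegral.integral_congr
              intro θ _
              exact G_even (-(2*q)) θ
      rw [heq]
      exact hright
    rw [hsplit]
    have hfinal : 5 * (d^(1-2*q)/(2*q-1)) + 2 * d^(1-2*q) + 5 * (d^(1-2*q)/(2*q-1))
        ≤ Cq q * d^(1-2*q) := by
      rw [Cq]
      have hpow : 0 ≤ d^(1-2*q) := Real.rpow_nonneg hd0.le _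
      have h10 : 5 * (d^(1-2*q)/(2*q-1)) + 5 * (d^(1-2*q)/(2*q-1))
          = (10/(2*q-1)) * d^(1-2*q) := by field_simp; ring
      have h4π : 0 ≤ 4*Real.pi * d^(1-2*q) := by positivity
      nlinarith
    linarith

lemma kernel_integral {c : ℂ} (hc : Complex.abs c < 1) {q : ℝ} (hq1 : 1/2 < q) (hq2 : q ≤ 1) :
    ∫ θ in (0:ℝ)..2*Real.pi, (Complex.abs (1 - c * Complex.exp (θ * Complex.I))) ^ (-(2*q))
      ≤ Cq q * (1 - Complex.abs c) ^ (1-2*q) := by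
  set ρ := Complex.abs c with hρdef
  have hρ0 : 0 ≤ ρ := Complex.abs.nonneg c
  set ψ := Complex.arg c with hψdef
  have hpoint : ∀ θ : ℝ, (Complex.abs (1 - c * Complex.exp (θ * Complex.I))) ^ (-(2*q))
      = G ρ (-(2*q)) (θ + ψ) := by
    intro θ
    rw [G]
    congr 3
    conv_lhs => rw [← Complex.abs_mul_exp_arg_mul_I c]
    rw [← hρdef, ← hψdef, mul_assoc, ← Complex.exp_add]
    congr 2
    push_cast
    ring
  have h1 : ∫ θ in (0:ℝ)..2*Real.pi, (Complex.abs (1 - c * Complex.exp (θ * Complex.I))) ^ (-(2*q))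
      = ∫ θ in (0:ℝ)..2*Real.pi, G ρ (-(2*q)) (θ + ψ) := by
    apply intervalIntegral.integral_congr
    intro θ _
    exact hpoint θ
  rw [h1, intervalIntegral.integral_comp_add_right (G ρ (-(2*q))) ψ]
  have h2 : ∫ θ in (0+ψ)..(2*Real.pi+ψ), G ρ (-(2*q)) θ
      = ∫ θ in (-Real.pi)..Real.pi, G ρ (-(2*q)) θ := by
    have hper := (G_periodic (ρ := ρ) (-(2*q))).intervalIntegral_add_eq ψ (-Real.pi)
    rw [show -Real.pi + 2*Real.pi = Real.pi by ring] at hper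
    rw [show (0:ℝ)+ψ = ψ by ring, show 2*Real.pi+ψ = ψ + 2*Real.pi by ring]
    exact hper
  rw [h2]
  exact integral_G_symm_interval hρ0 hc hq1 hq2


lemma add_rpow_le {a b q : ℝ} (ha : 0 ≤ a) (hb : 0 ≤ b) (h0 : 0 ≤ q) (h1 : q ≤ 1) :
    (a+b)^q ≤ a^q + b^q := by
  have := NNReal.rpow_add_le_add_rpow a.toNNReal b.toNNReal h0 h1
  calc (a+b)^q = ((a.toNNReal + b.toNNReal : ℝ≥0) : ℝ)^q := by
        rw [NNReal.coe_add, Real.coe_toNNReal _ ha, Real.coe_toNNReal _ hb]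
    _ = (((a.toNNReal + b.toNNReal) ^ q : ℝ≥0) : ℝ) := by rw [NNReal.coe_rpow]
    _ ≤ (((a.toNNReal ^ q + b.toNNReal ^ q : ℝ≥0)) : ℝ) := by exact_mod_cast this
    _ = a^q + b^q := by
        rw [NNReal.coe_add, NNReal.coe_rpow, NNReal.coe_rpow,
          Real.coe_toNNReal _ ha, Real.coe_toNNReal _ hb]

lemma sum_rpow_le {f : ℕ → ℝ} {s : Finset ℕ} (hf : ∀ n ∈ s, 0 ≤ f n) {q : ℝ}
    (h0 : 0 < q) (h1 : q ≤ 1) :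
    (∑ n ∈ s, f n) ^ q ≤ ∑ n ∈ s, (f n) ^ q := by
  classical
  induction s using Finset.cons_induction with
  | empty => simp [Real.zero_rpow (ne_of_gt h0)]
  | cons a s ha ih =>
    rw [Finset.sum_cons, Finset.sum_cons]
    have hfa : 0 ≤ f a := hf a (Finset.mem_cons_self a s)
    have hfs : 0 ≤ ∑ n ∈ s, f n := Finset.sum_nonneg fun n hn => hf n (Finset.mem_cons_of_mem hn)
    calc (f a + ∑ n ∈ s, f n)^q ≤ (f a)^q + (∑ n ∈ s, f n)^q := add_rpow_le hfa hfs h0.le h1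
      _ ≤ (f a)^q + ∑ n ∈ s, (f n)^q := by
          have := ih (fun n hn => hf n (Finset.mem_cons_of_mem hn))
          linarith

lemma h_est {h : ℝ → ℝ} {q : ℝ} (hq1 : 1/2 < q) (hq2 : q ≤ 1)
    (hpos : ∀ t ∈ Ioo (0:ℝ) 1, 0 < h t)
    (hdec : AntitoneOn (fun t => h t / t ^ q) (Ioo 0 1))
    (hinc : MonotoneOn (fun t => h t / t ^ (1 - q)) (Ioo 0 1))
    {s t : ℝ} (hs : s ∈ Ioo (0:ℝ) 1) (ht0 : 0 < t) (ht : t ≤ 1/2) :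
    s ^ q * (s + t - s*t) ^ (1-2*q) ≤ 2 * (h s * t^(1-q) / h t) := by
  have htI : t ∈ Ioo (0:ℝ) 1 := ⟨ht0, by linarith⟩
  have hhs : 0 < h s := hpos s hs
  have hht : 0 < h t := hpos t htI
  have hs0 := hs.1
  have hs1 := hs.2
  have htq : (0:ℝ) < t ^ q := Real.rpow_pos_of_pos ht0 q
  have hsq : (0:ℝ) < s ^ q := Real.rpow_pos_of_pos hs0 q
  have ht1q : (0:ℝ) < t ^ (1-q) := Real.rpow_pos_of_pos ht0 _
  have hs1q : (0:ℝ) < s ^ (1-q) := Real.rpow_pos_of_pos hs0 _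
  rcases le_or_gt s t with hst | hst
  · -- s ≤ t
    have hd := hdec hs htI hst
    simp only at hd
    have hsq_le : s ^ q ≤ h s * t ^ q / h t := by
      rw [div_le_div_iff₀ htq hsq] at hd
      rw [le_div_iff₀ hht]
      nlinarith
    have hbase : t ≤ s + t - s*t := by nlinarith
    have hker : (s + t - s*t) ^ (1-2*q) ≤ t ^ (1-2*q) :=
      Real.rpow_le_rpow_of_nonpos ht0 hbase (by linarith)
    calc s ^ q * (s + t - s*t) ^ (1-2*q)
        ≤ (h s * t ^ q / h t) * t ^ (1-2*q) := by
          apply mul_le_mul hsq_le hker (Real.rpow_nonneg (by nlinarith) _) (by positivity)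
      _ = h s * (t ^ q * t ^ (1-2*q)) / h t := by ring
      _ = h s * t ^ (1-q) / h t := by
          rw [← Real.rpow_add ht0]
          ring_nf
      _ ≤ 2 * (h s * t^(1-q) / h t) := by
          have : 0 ≤ h s * t ^ (1-q) / h t := by positivity
          linarith
  · -- t < s
    have hi := hinc htI hs hst.le
    simp only at hi
    have hs1q_le : s ^ (1-q) ≤ h s * t ^ (1-q) / h t := by
      rw [div_le_div_iff₀ ht1q hs1q] at hi
      rw [le_div_iff₀ hht]
      nlinarith
    have hbase : s/2 ≤ s + t - s*t := by nlinarith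
    have hker : (s + t - s*t) ^ (1-2*q) ≤ (s/2) ^ (1-2*q) :=
      Real.rpow_le_rpow_of_nonpos (by linarith) hbase (by linarith)
    have hsplit : (s/2 : ℝ) ^ (1-2*q) = s ^ (1-2*q) * 2 ^ (2*q-1) := by
      rw [Real.div_rpow hs0.le (by norm_num), div_eq_mul_inv, ← Real.rpow_neg (by norm_num : (0:ℝ) ≤ 2)]
      ring_nf
    have h2le : (2:ℝ) ^ (2*q-1) ≤ 2 := by
      calc (2:ℝ)^(2*q-1) ≤ (2:ℝ)^(1:ℝ) := Real.rpow_le_rpow_of_exponent_le (by norm_num) (by linarith)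
        _ = 2 := Real.rpow_one 2
    have hcomb : s ^ q * s ^ (1-2*q) = s ^ (1-q) := by
      rw [← Real.rpow_add hs0]
      ring_nf
    calc s ^ q * (s + t - s*t) ^ (1-2*q)
        ≤ s ^ q * (s ^ (1-2*q) * 2 ^ (2*q-1)) := by
          rw [← hsplit]
          exact mul_le_mul_of_nonneg_left hker hsq.le
      _ = (s ^ q * s ^ (1-2*q)) * 2 ^ (2*q-1) := by ring
      _ = s ^ (1-q) * 2 ^ (2*q-1) := by rw [hcomb]
      _ ≤ (h s * t ^ (1-q) / h t) * 2 := by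
          apply mul_le_mul hs1q_le h2le (by positivity) (by positivity)
      _ = 2 * (h s * t^(1-q) / h t) := by ring
noncomputable def P (z : ℕ → ℂ) (N : ℕ) (w : ℂ) : ℂ := ∏ n ∈ Finset.range N, bf (z n) w

lemma blaschke_eq (z : ℕ → ℂ) (w : ℂ) : blaschkeProduct z w = ∏' n, bf (z n) w := rfl


section main
variable {z : ℕ → ℂ} (hz : ∀ n, Complex.abs (z n) < 1) (hz0 : ∀ n, z n ≠ 0)
  (hb : Summable fun n => 1 - Complex.abs (z n))

include hz in
lemma abs_P_le_one {N : ℕ} (hw : Complex.abs w ≤ 1) : Complex.abs (P z N w) ≤ 1 :=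
  abs_prod_le_one fun n _ => abs_bf_le_one (hz n) hw

include hz hz0 in
lemma abs_bf_sub_one_le (hw : Complex.abs w < 1) (n : ℕ) :
    Complex.abs (bf (z n) w - 1) ≤ 2 * (1 - Complex.abs (z n)) / (1 - Complex.abs w) := by
  rw [(Complex.abs).map_sub]
  exact abs_one_sub_bf_le (hz n) (hz0 n) hw

include hz hz0 hb in
lemma summable_bf_sub_one (hw : Complex.abs w < 1) :
    Summable fun n => Complex.abs (bf (z n) w - 1) := by
  have h1 : Summable fun n => 2 * (1 - Complex.abs (z n)) / (1 - Complex.abs w) :=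
    (hb.mul_left 2).div_const _
  exact Summable.of_nonneg_of_le (fun n => Complex.abs.nonneg _)
    (fun n => abs_bf_sub_one_le hz hz0 hw n) h1

include hz hz0 hb in
lemma multipliable_bf (hw : Complex.abs w < 1) : Multipliable fun n => bf (z n) w :=
  multipliable_of_summable (fun n => abs_bf_le_one (hz n) hw.le)
    (summable_bf_sub_one hz hz0 hb hw)

include hz hz0 hb in
lemma tendsto_P (hw : Complex.abs w < 1) :
    Tendsto (fun N => P z N w) atTop (𝓝 (blaschkeProduct z w)) := by
  rw [blaschke_eq]
  exact ((multipliable_bf hz hz0 hb hw).hasProd).tendsto_prod_nat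

include hz hz0 hb in
lemma abs_blaschke_le_one (hw : Complex.abs w < 1) :
    Complex.abs (blaschkeProduct z w) ≤ 1 := by
  have h := (Complex.continuous_abs.tendsto _).comp (tendsto_P hz hz0 hb hw)
  exact le_of_tendsto h (Eventually.of_forall fun N => abs_P_le_one hz hw.le)

include hz hz0 hb in
lemma uniformCauchy_P {ρ : ℝ} (hρ : ρ < 1) :
    UniformCauchySeqOn (P z) atTop (closedBall (0:ℂ) ρ) := by
  rw [Metric.uniformCauchySeqOn_iff]
  intro ε hε
  have hsum : Summable fun n => 2 * (1 - Complex.abs (z n)) / (1 - ρ) :=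
    (hb.mul_left 2).div_const _
  have hc : CauchySeq (fun N => ∑ n ∈ Finset.range N, 2 * (1 - Complex.abs (z n)) / (1 - ρ)) :=
    hsum.hasSum.tendsto_sum_nat.cauchySeq
  rw [Metric.cauchySeq_iff] at hc
  obtain ⟨N₀, hN₀⟩ := hc ε hε
  refine ⟨N₀, fun M hM N hN x hx => ?_⟩
  wlog hNM : N ≤ M generalizing M N
  · rw [dist_comm]; exact this N hN M hM (le_of_not_ge hNM)
  have hx1 : Complex.abs x ≤ ρ := by simpa [Complex.dist_eq] using hx
  have hx2 : Complex.abs x < 1 := lt_of_le_of_lt hx1 hρ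
  have hb1 := prod_diff_le (f := fun n => bf (z n) x)
    (fun n => abs_bf_le_one (hz n) hx2.le) (Finset.range_subset_range.2 hNM)
  have hb2 : ∑ n ∈ Finset.range M \ Finset.range N, Complex.abs (bf (z n) x - 1)
      ≤ ∑ n ∈ Finset.range M \ Finset.range N, 2 * (1 - Complex.abs (z n)) / (1 - ρ) := by
    apply Finset.sum_le_sum
    intro n _
    refine le_trans (abs_bf_sub_one_le hz hz0 hx2 n) ?_
    apply div_le_div_of_nonneg_left _ (by linarith) (by linarith)
    · nlinarith [hz n, Complex.abs.nonneg (z n)]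
  have hb3 : ∑ n ∈ Finset.range M \ Finset.range N, 2 * (1 - Complex.abs (z n)) / (1 - ρ)
      = (∑ n ∈ Finset.range M, 2 * (1 - Complex.abs (z n)) / (1 - ρ))
        - ∑ n ∈ Finset.range N, 2 * (1 - Complex.abs (z n)) / (1 - ρ) := by
    rw [eq_sub_iff_add_eq, Finset.sum_sdiff (Finset.range_subset_range.2 hNM)]
  have hd := hN₀ M hM N hN
  rw [Real.dist_eq] at hd
  have : ∑ n ∈ Finset.range M \ Finset.range N, 2 * (1 - Complex.abs (z n)) / (1 - ρ) < ε := by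
    rw [hb3]
    exact lt_of_le_of_lt (le_abs_self _) hd
  rw [dist_eq_norm]
  calc ‖P z M x - P z N x‖ = Complex.abs (P z M x - P z N x) := rfl
    _ ≤ ∑ n ∈ Finset.range M \ Finset.range N, Complex.abs (bf (z n) x - 1) := hb1
    _ ≤ _ := hb2
    _ < ε := this

include hz hz0 hb in
lemma tlu_P {ρ : ℝ} (hρ0 : 0 ≤ ρ) (hρ : ρ < 1) :
    TendstoLocallyUniformlyOn (P z) (blaschkeProduct z) atTop (ball (0:ℂ) ρ) := by
  have h1 : TendstoUniformlyOn (P z) (blaschkeProduct z) atTop (closedBall (0:ℂ) ρ) := by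
    apply (uniformCauchy_P hz hz0 hb hρ).tendstoUniformlyOn_of_tendsto
    intro x hx
    have hx2 : Complex.abs x < 1 := by
      have : Complex.abs x ≤ ρ := by simpa [Complex.dist_eq] using hx
      linarith
    exact tendsto_P hz hz0 hb hx2
  exact (h1.mono ball_subset_closedBall).tendstoLocallyUniformlyOn

include hz in
lemma P_differentiableOn {N : ℕ} {ρ : ℝ} (hρ : ρ ≤ 1) :
    DifferentiableOn ℂ (P z N) (ball (0:ℂ) ρ) := by
  intro x hx
  have hx2 : Complex.abs x < 1 := by
    have : Complex.abs x < ρ := by simpa [Complex.dist_eq] using hx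
    linarith
  apply DifferentiableAt.differentiableWithinAt
  apply DifferentiableAt.fun_finsetProd
  intro n _
  exact (bf_hasDerivAt (denom_ne (hz n) hx2.le)).differentiableAt

include hz hz0 hb in
lemma blaschke_differentiableOn : DifferentiableOn ℂ (blaschkeProduct z) (ball (0:ℂ) 1) := by
  intro x hx
  have hx2 : Complex.abs x < 1 := by simpa [Complex.dist_eq] using hx
  set ρ := (1 + Complex.abs x) / 2 with hρdef
  have hρ0 : 0 ≤ ρ := by positivity
  have hρ1 : ρ < 1 := by rw [hρdef]; linarith
  have hxρ : x ∈ ball (0:ℂ) ρ := by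
    simp only [mem_ball, Complex.dist_eq, sub_zero, Complex.norm_eq_abs]
    rw [hρdef]; linarith
  have hd := (tlu_P hz hz0 hb hρ0 hρ1).differentiableOn
    (Eventually.of_forall fun N => P_differentiableOn hz hρ1.le) isOpen_ball
  exact ((hd x hxρ).differentiableAt (isOpen_ball.mem_nhds hxρ)).differentiableWithinAt

include hz hz0 hb in
lemma tendsto_deriv_P (hw : Complex.abs w < 1) :
    Tendsto (fun N => deriv (P z N) w) atTop (𝓝 (deriv (blaschkeProduct z) w)) := by
  set ρ := (1 + Complex.abs w) / 2 with hρdef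
  have hρ0 : 0 ≤ ρ := by positivity
  have hρ1 : ρ < 1 := by rw [hρdef]; linarith
  have hwρ : w ∈ ball (0:ℂ) ρ := by
    simp only [mem_ball, Complex.dist_eq, sub_zero, Complex.norm_eq_abs]
    rw [hρdef]; linarith
  have h := (tlu_P hz hz0 hb hρ0 hρ1).deriv
    (Eventually.of_forall fun N => P_differentiableOn hz hρ1.le) isOpen_ball
  exact h.tendsto_at hwρ

include hz in
lemma abs_deriv_P_le {N : ℕ} (hw : Complex.abs w < 1) :
    Complex.abs (deriv (P z N) w)
      ≤ ∑ n ∈ Finset.range N, 2 * (1 - Complex.abs (z n))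
          / (Complex.abs (1 - (starRingEnd ℂ) (z n) * w))^2 := by
  classical
  have hder : HasDerivAt (P z N)
      (∑ n ∈ Finset.range N, (∏ m ∈ (Finset.range N).erase n, bf (z m) w) *
        (((Complex.abs (z n) : ℂ) / z n) * ((((Complex.abs (z n) : ℂ))^2 - 1)
          / (1 - (starRingEnd ℂ) (z n) * w)^2))) w := by
    exact HasDerivAt.fun_finsetProd fun n _ => bf_hasDerivAt (denom_ne (hz n) hw.le)
  rw [hder.deriv]
  refine le_trans (Complex.abs.sum_le _ _) (Finset.sum_le_sum fun n _ => ?_)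
  rw [map_mul]
  have h1 : Complex.abs (∏ m ∈ (Finset.range N).erase n, bf (z m) w) ≤ 1 :=
    abs_prod_le_one fun m _ => abs_bf_le_one (hz m) hw.le
  have h2 : Complex.abs (((Complex.abs (z n) : ℂ) / z n) * ((((Complex.abs (z n) : ℂ))^2 - 1)
      / (1 - (starRingEnd ℂ) (z n) * w)^2))
      ≤ 2 * (1 - Complex.abs (z n)) / (Complex.abs (1 - (starRingEnd ℂ) (z n) * w))^2 := by
    rw [map_mul, map_div₀, map_div₀, map_pow]
    have ha0 : Complex.abs ((Complex.abs (z n) : ℂ)) / Complex.abs (z n) ≤ 1 := by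
      rw [Complex.abs_ofReal, _root_.abs_of_nonneg (Complex.abs.nonneg (z n))]
      exact div_self_le_one _
    have hnum : Complex.abs (((Complex.abs (z n) : ℂ))^2 - 1) ≤ 2 * (1 - Complex.abs (z n)) := by
      have : (((Complex.abs (z n) : ℂ))^2 - 1) = (((Complex.abs (z n)^2 - 1 : ℝ)) : ℂ) := by
        push_cast; ring
      rw [this, Complex.abs_ofReal]
      rw [_root_.abs_of_nonpos (by nlinarith [hz n, Complex.abs.nonneg (z n)])]
      nlinarith [hz n, Complex.abs.nonneg (z n)]
    have hdpos : 0 < (Complex.abs (1 - (starRingEnd ℂ) (z n) * w))^2 := by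
      have := abs_denom_pos (hz n) hw.le
      positivity
    calc Complex.abs ((Complex.abs (z n)):ℂ) / Complex.abs (z n) *
          (Complex.abs ((((Complex.abs (z n) : ℂ))^2 - 1)) / (Complex.abs (1 - (starRingEnd ℂ) (z n) * w))^2)
        ≤ 1 * (2 * (1 - Complex.abs (z n)) / (Complex.abs (1 - (starRingEnd ℂ) (z n) * w))^2) := by
          apply mul_le_mul ha0 _ (by positivity) zero_le_one
          exact div_le_div_of_nonneg_right hnum hdpos.le
      _ = _ := one_mul _
  calc Complex.abs (∏ m ∈ (Finset.range N).erase n, bf (z m) w) * Complex.abs (_)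
      ≤ 1 * (2 * (1 - Complex.abs (z n)) / (Complex.abs (1 - (starRingEnd ℂ) (z n) * w))^2) := by
        exact mul_le_mul h1 h2 (Complex.abs.nonneg _) zero_le_one
    _ = _ := one_mul _

include hz hz0 hb in
lemma abs_deriv_blaschke_le (hw : Complex.abs w < 1) :
    Complex.abs (deriv (blaschkeProduct z) w) ≤ 3 / (1 - Complex.abs w) := by
  have hball : ball w (1 - Complex.abs w) ⊆ ball (0:ℂ) 1 := by
    intro x hx
    simp only [mem_ball, Complex.dist_eq, sub_zero, Complex.norm_eq_abs] at *
    calc Complex.abs x ≤ Complex.abs (x - w) + Complex.abs w := by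
          simpa using Complex.abs.add_le (x - w) w
      _ < 1 := by linarith
  have hdiff : DifferentiableOn ℂ (blaschkeProduct z) (ball w (1 - Complex.abs w)) :=
    (blaschke_differentiableOn hz hz0 hb).mono hball
  have hmaps : MapsTo (blaschkeProduct z) (ball w (1 - Complex.abs w))
      (ball (blaschkeProduct z w) 3) := by
    intro x hx
    have hx1 : Complex.abs x < 1 := by
      have := hball hx
      simpa [Complex.dist_eq] using this
    simp only [mem_ball, Complex.dist_eq]
    calc Complex.abs (blaschkeProduct z x - blaschkeProduct z w)
        ≤ Complex.abs (blaschkeProduct z x) + Complex.abs (blaschkeProduct z w) := by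
          simpa [sub_eq_add_neg] using Complex.abs.add_le (blaschkeProduct z x) (-(blaschkeProduct z w))
      _ ≤ 1 + 1 := add_le_add (abs_blaschke_le_one hz hz0 hb hx1) (abs_blaschke_le_one hz hz0 hb hw)
      _ < 3 := by norm_num
  have := Complex.norm_deriv_le_div_of_mapsTo_ball hdiff (hmaps.mono_right ball_subset_closedBall) (by linarith)
  simpa using this

end main

end BP

-- THEOREM PART
set_option maxHeartbeats 2000000 in
theorem Hp_means_first_deriv_bigO (z : ℕ → ℂ) (h : ℝ → ℝ)
    (hz : ∀ n, z n ∈ Metric.ball (0:ℂ) 1) (hz0 : ∀ n, z n ≠ 0)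
    (hb : Summable fun n => 1 - ‖z n‖)
    (hcont : ContinuousOn h (Ioo 0 1)) (hpos : ∀ t ∈ Ioo (0:ℝ) 1, 0 < h t)
    (hlim : Tendsto h (𝓝[>] 0) (𝓝 0))
    (hsum : Summable fun n => h (1 - ‖z n‖))
    (q : ℝ) (hq1 : 1 / 2 < q) (hq2 : q ≤ 1)
    (hdec : AntitoneOn (fun t => h t / t ^ q) (Ioo 0 1))
    (hinc : MonotoneOn (fun t => h t / t ^ (1 - q)) (Ioo 0 1)) :
    ∀ p : ℝ, q ≤ p →
      (fun r : ℝ => ∫ θ in (0:ℝ)..2 * Real.pi,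
          ‖deriv (blaschkeProduct z) ((r : ℂ) * Complex.exp (θ * Complex.I))‖ ^ p)
        =O[𝓝[<] 1] fun r : ℝ => 1 / ((1 - r) ^ (p - 1) * h (1 - r)) := by
  intro p hpq
  simp only [Complex.norm_eq_abs] at hb hsum ⊢
  have hza : ∀ n, Complex.abs (z n) < 1 := fun n => by
    have := hz n
    rwa [Metric.mem_ball, Complex.dist_eq, sub_zero] at this
  have hq0 : (0:ℝ) < q := by linarith
  have hp0 : (0:ℝ) < p := by linarith
  have h2π : (0:ℝ) ≤ 2 * Real.pi := by positivity
  have hsnIoo : ∀ n, 1 - Complex.abs (z n) ∈ Ioo (0:ℝ) 1 := fun n =>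
    ⟨by linarith [hza n], by nlinarith [Complex.abs.pos_iff.mpr (hz0 n)]⟩
  set H := ∑' n, h (1 - Complex.abs (z n)) with hHdef
  have hH0 : 0 ≤ H := tsum_nonneg fun n => (hpos _ (hsnIoo n)).le
  have hCq0 : 0 < BP.Cq q := by
    rw [BP.Cq]
    have h1 : 0 < 2*q - 1 := by linarith
    have := Real.pi_pos
    positivity
  apply Asymptotics.IsBigO.of_bound ((3:ℝ)^(p-q) * (4 * BP.Cq q * H))
  filter_upwards [Ioo_mem_nhdsLT_of_mem
    (⟨by norm_num, le_refl (1:ℝ)⟩ : (1:ℝ) ∈ Ioc (1/2 : ℝ) 1)] with r hr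
  obtain ⟨hr12, hr1⟩ := hr
  have hr0 : (0:ℝ) < r := by linarith
  set t := 1 - r with htdef
  have ht0 : 0 < t := by rw [htdef]; linarith
  have ht12 : t ≤ 1/2 := by rw [htdef]; linarith
  have htIoo : t ∈ Ioo (0:ℝ) 1 := ⟨ht0, by linarith⟩
  have hht : 0 < h t := hpos t htIoo
  -- circle map
  have contw : Continuous (fun θ : ℝ => (r:ℂ) * Complex.exp ((θ:ℂ) * Complex.I)) :=
    continuous_const.mul (Complex.continuous_exp.comp
      (Complex.continuous_ofReal.mul continuous_const))
  have habsw : ∀ θ : ℝ, Complex.abs ((r:ℂ) * Complex.exp ((θ:ℂ) * Complex.I)) = r := by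
    intro θ
    rw [map_mul, Complex.abs_ofReal, Complex.abs_exp_ofReal_mul_I,
      _root_.abs_of_nonneg hr0.le, mul_one]
  have habsw1 : ∀ θ : ℝ, Complex.abs ((r:ℂ) * Complex.exp ((θ:ℂ) * Complex.I)) < 1 := by
    intro θ; rw [habsw θ]; exact hr1
  have hwball : ∀ θ : ℝ, (r:ℂ) * Complex.exp ((θ:ℂ) * Complex.I) ∈ Metric.ball (0:ℂ) 1 := by
    intro θ
    rw [Metric.mem_ball, dist_zero_right, Complex.norm_eq_abs]
    exact habsw1 θ
  -- continuity of integrands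
  have hBdiff := BP.blaschke_differentiableOn hza hz0 hb
  have hBderivCont : ContinuousOn (deriv (blaschkeProduct z)) (Metric.ball (0:ℂ) 1) :=
    ((hBdiff.analyticOnNhd Metric.isOpen_ball).deriv).continuousOn
  have hcB : Continuous fun θ : ℝ =>
      deriv (blaschkeProduct z) ((r:ℂ) * Complex.exp ((θ:ℂ) * Complex.I)) :=
    hBderivCont.comp_continuous contw hwball
  have hvq_cont : Continuous fun θ : ℝ =>
      (Complex.abs (deriv (blaschkeProduct z) ((r:ℂ) * Complex.exp ((θ:ℂ) * Complex.I))))^q :=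
    (Complex.continuous_abs.comp hcB).rpow_const (fun _ => Or.inr hq0.le)
  have hvp_cont : Continuous fun θ : ℝ =>
      (Complex.abs (deriv (blaschkeProduct z) ((r:ℂ) * Complex.exp ((θ:ℂ) * Complex.I))))^p :=
    (Complex.continuous_abs.comp hcB).rpow_const (fun _ => Or.inr hp0.le)
  have hcP : ∀ N, Continuous fun θ : ℝ =>
      deriv (BP.P z N) ((r:ℂ) * Complex.exp ((θ:ℂ) * Complex.I)) := by
    intro N
    have hPd : DifferentiableOn ℂ (BP.P z N) (Metric.ball (0:ℂ) 1) :=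
      BP.P_differentiableOn hza (le_refl 1)
    exact ((hPd.analyticOnNhd Metric.isOpen_ball).deriv).continuousOn.comp_continuous contw hwball
  have huN_cont : ∀ N, Continuous fun θ : ℝ =>
      (Complex.abs (deriv (BP.P z N) ((r:ℂ) * Complex.exp ((θ:ℂ) * Complex.I))))^q := fun N =>
    (Complex.continuous_abs.comp (hcP N)).rpow_const (fun _ => Or.inr hq0.le)
  -- per-n bound
  have per_n : ∀ n : ℕ, ∫ θ in (0:ℝ)..2*Real.pi,
      (2*(1 - Complex.abs (z n)) / (Complex.abs (1 - (starRingEnd ℂ) (z n) *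
        ((r:ℂ) * Complex.exp ((θ:ℂ) * Complex.I))))^2)^q
      ≤ 4 * BP.Cq q * (h (1 - Complex.abs (z n)) * t^(1-q) / h t) := by
    intro n
    set s := 1 - Complex.abs (z n) with hsdef
    have hsIoo := hsnIoo n
    rw [← hsdef] at hsIoo
    set c := (starRingEnd ℂ) (z n) * (r:ℂ) with hcdef
    have hcabs : Complex.abs c = Complex.abs (z n) * r := by
      rw [hcdef, map_mul, Complex.abs_conj, Complex.abs_ofReal, _root_.abs_of_nonneg hr0.le]
    have hc1 : Complex.abs c < 1 := by
      rw [hcabs]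
      nlinarith [hza n, Complex.abs.nonneg (z n)]
    have hpt : ∀ θ : ℝ,
        (2*s / (Complex.abs (1 - (starRingEnd ℂ) (z n) *
          ((r:ℂ) * Complex.exp ((θ:ℂ) * Complex.I))))^2)^q
        = (2*s)^q * (Complex.abs (1 - c * Complex.exp ((θ:ℂ) * Complex.I)))^(-(2*q)) := by
      intro θ
      have harg : (starRingEnd ℂ) (z n) * ((r:ℂ) * Complex.exp ((θ:ℂ) * Complex.I))
          = c * Complex.exp ((θ:ℂ) * Complex.I) := by rw [hcdef]; ring
      rw [harg]
      set A := Complex.abs (1 - c * Complex.exp ((θ:ℂ) * Complex.I)) with hAdef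
      have hA0 : 0 < A := by
        rw [hAdef]
        have := BP.G_base_lb (Complex.abs.nonneg c) θ
        -- lower bound via |c|: use abs_denom-like
        have h1 := Complex.abs.le_sub (1 : ℂ) (c * Complex.exp ((θ:ℂ) * Complex.I))
        rw [map_one, map_mul, Complex.abs_exp_ofReal_mul_I, mul_one] at h1
        linarith
      have hs2 : (0:ℝ) ≤ 2*s := by nlinarith [hsIoo.1]
      rw [Real.div_rpow hs2 (by positivity)]
      have hA2q : (A^2)^q = A^((2:ℝ)*q) := by
        rw [← Real.rpow_natCast_mul hA0.le 2 q]
        norm_num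
      rw [hA2q, div_eq_mul_inv, ← Real.rpow_neg hA0.le]
    have hint : ∫ θ in (0:ℝ)..2*Real.pi,
        (2*s / (Complex.abs (1 - (starRingEnd ℂ) (z n) *
          ((r:ℂ) * Complex.exp ((θ:ℂ) * Complex.I))))^2)^q
        = (2*s)^q * ∫ θ in (0:ℝ)..2*Real.pi,
            (Complex.abs (1 - c * Complex.exp ((θ:ℂ) * Complex.I)))^(-(2*q)) := by
      rw [← intervalIntegral.integral_const_mul]
      apply intervalIntegral.integral_congr
      intro θ _
      exact hpt θ
    rw [hint]
    have hker := BP.kernel_integral hc1 hq1 hq2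
    have hs2 : (0:ℝ) ≤ (2*s)^q := Real.rpow_nonneg (by nlinarith [hsIoo.1]) _
    have hstep1 : (2*s)^q * ∫ θ in (0:ℝ)..2*Real.pi,
        (Complex.abs (1 - c * Complex.exp ((θ:ℂ) * Complex.I)))^(-(2*q))
        ≤ (2*s)^q * (BP.Cq q * (1 - Complex.abs c)^(1-2*q)) :=
      mul_le_mul_of_nonneg_left hker hs2
    have habsc : 1 - Complex.abs c = s + t - s*t := by
      rw [hcabs]
      have : Complex.abs (z n) = 1 - s := by rw [hsdef]; ring
      rw [this, htdef]
      ring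
    have h2q : (2*s)^q = 2^q * s^q := Real.mul_rpow (by norm_num) (by linarith [hsIoo.1])
    have h2qle : (2:ℝ)^q ≤ 2 := by
      calc (2:ℝ)^q ≤ (2:ℝ)^(1:ℝ) := Real.rpow_le_rpow_of_exponent_le (by norm_num) hq2
        _ = 2 := Real.rpow_one 2
    have hhest := BP.h_est hq1 hq2 hpos hdec hinc hsIoo ht0 ht12
    have hsq0 : (0:ℝ) ≤ s^q := Real.rpow_nonneg (by linarith [hsIoo.1]) _
    have hX0 : (0:ℝ) ≤ (s + t - s*t)^(1-2*q) := Real.rpow_nonneg (by nlinarith [hsIoo.1, hsIoo.2]) _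
    have h2q0 : (0:ℝ) ≤ (2:ℝ)^q := Real.rpow_nonneg (by norm_num) _
    have hrh0 : (0:ℝ) ≤ h s * t^(1-q) / h t := by
      have := (hpos s hsIoo).le
      positivity
    calc (2*s)^q * ∫ θ in (0:ℝ)..2*Real.pi,
        (Complex.abs (1 - c * Complex.exp ((θ:ℂ) * Complex.I)))^(-(2*q))
        ≤ (2*s)^q * (BP.Cq q * (1 - Complex.abs c)^(1-2*q)) := hstep1
      _ = BP.Cq q * (2^q * (s^q * (s + t - s*t)^(1-2*q))) := by
          rw [habsc, h2q]; ring
      _ ≤ BP.Cq q * (2 * (2 * (h s * t^(1-q) / h t))) := by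
          apply mul_le_mul_of_nonneg_left _ hCq0.le
          have hmul : s^q * (s + t - s*t)^(1-2*q) ≤ 2 * (h s * t^(1-q) / h t) := hhest
          nlinarith [mul_nonneg hsq0 hX0]
      _ = 4 * BP.Cq q * (h s * t^(1-q) / h t) := by ring
  -- integral bound for partial products
  have int_q_P : ∀ N : ℕ, ∫ θ in (0:ℝ)..2*Real.pi,
      (Complex.abs (deriv (BP.P z N) ((r:ℂ) * Complex.exp ((θ:ℂ) * Complex.I))))^q
      ≤ 4 * BP.Cq q * H * t^(1-q) / h t := by
    intro N
    have hA_cont : ∀ n : ℕ, Continuous fun θ : ℝ =>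
        (2*(1 - Complex.abs (z n)) / (Complex.abs (1 - (starRingEnd ℂ) (z n) *
          ((r:ℂ) * Complex.exp ((θ:ℂ) * Complex.I))))^2)^q := by
      intro n
      have hAc : Continuous fun θ : ℝ => Complex.abs (1 - (starRingEnd ℂ) (z n) *
          ((r:ℂ) * Complex.exp ((θ:ℂ) * Complex.I))) :=
        Complex.continuous_abs.comp (continuous_const.sub (continuous_const.mul contw))
      have hAne : ∀ θ : ℝ, (Complex.abs (1 - (starRingEnd ℂ) (z n) *
          ((r:ℂ) * Complex.exp ((θ:ℂ) * Complex.I))))^2 ≠ 0 := by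
        intro θ
        have := BP.abs_denom_pos (hza n) (habsw1 θ).le
        positivity
      exact ((continuous_const.div (hAc.pow 2) hAne)).rpow_const (fun _ => Or.inr hq0.le)
    have hpt : ∀ θ ∈ Icc (0:ℝ) (2*Real.pi),
        (Complex.abs (deriv (BP.P z N) ((r:ℂ) * Complex.exp ((θ:ℂ) * Complex.I))))^q
        ≤ ∑ n ∈ Finset.range N, (2*(1 - Complex.abs (z n)) /
            (Complex.abs (1 - (starRingEnd ℂ) (z n) *
              ((r:ℂ) * Complex.exp ((θ:ℂ) * Complex.I))))^2)^q := by
      intro θ _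
      have h1 := BP.abs_deriv_P_le (N := N) hza (habsw1 θ)
      have h2 : (Complex.abs (deriv (BP.P z N) ((r:ℂ) * Complex.exp ((θ:ℂ) * Complex.I))))^q
          ≤ (∑ n ∈ Finset.range N, 2*(1 - Complex.abs (z n)) /
              (Complex.abs (1 - (starRingEnd ℂ) (z n) *
                ((r:ℂ) * Complex.exp ((θ:ℂ) * Complex.I))))^2)^q :=
        Real.rpow_le_rpow (Complex.abs.nonneg _) h1 hq0.le
      refine h2.trans (BP.sum_rpow_le (fun n _ => ?_) hq0 hq2)
      have := BP.abs_denom_pos (hza (n := n)) (habsw1 θ).le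
      have hs := (hsnIoo n).1
      positivity
    have hint1 : ∫ θ in (0:ℝ)..2*Real.pi,
        (Complex.abs (deriv (BP.P z N) ((r:ℂ) * Complex.exp ((θ:ℂ) * Complex.I))))^q
        ≤ ∫ θ in (0:ℝ)..2*Real.pi, ∑ n ∈ Finset.range N,
            (2*(1 - Complex.abs (z n)) / (Complex.abs (1 - (starRingEnd ℂ) (z n) *
              ((r:ℂ) * Complex.exp ((θ:ℂ) * Complex.I))))^2)^q := by
      apply intervalIntegral.integral_mono_on (by positivity) ((huN_cont N).intervalIntegrable _ _)
        _ hpt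
      apply (continuous_finset_sum _ fun n _ => hA_cont n).intervalIntegrable
    have hint2 : ∫ θ in (0:ℝ)..2*Real.pi, ∑ n ∈ Finset.range N,
        (2*(1 - Complex.abs (z n)) / (Complex.abs (1 - (starRingEnd ℂ) (z n) *
          ((r:ℂ) * Complex.exp ((θ:ℂ) * Complex.I))))^2)^q
        = ∑ n ∈ Finset.range N, ∫ θ in (0:ℝ)..2*Real.pi,
            (2*(1 - Complex.abs (z n)) / (Complex.abs (1 - (starRingEnd ℂ) (z n) *
              ((r:ℂ) * Complex.exp ((θ:ℂ) * Complex.I))))^2)^q :=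
      intervalIntegral.integral_finset_sum (fun n _ => (hA_cont n).intervalIntegrable _ _)
    have hsum_le : ∑ n ∈ Finset.range N, ∫ θ in (0:ℝ)..2*Real.pi,
        (2*(1 - Complex.abs (z n)) / (Complex.abs (1 - (starRingEnd ℂ) (z n) *
          ((r:ℂ) * Complex.exp ((θ:ℂ) * Complex.I))))^2)^q
        ≤ ∑ n ∈ Finset.range N, 4 * BP.Cq q * (h (1 - Complex.abs (z n)) * t^(1-q) / h t) :=
      Finset.sum_le_sum fun n _ => per_n n
    have hfactor : ∑ n ∈ Finset.range N, 4 * BP.Cq q * (h (1 - Complex.abs (z n)) * t^(1-q) / h t)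
        = (4 * BP.Cq q * t^(1-q) / h t) * ∑ n ∈ Finset.range N, h (1 - Complex.abs (z n)) := by
      rw [Finset.mul_sum]
      apply Finset.sum_congr rfl
      intro n _
      ring
    have hsumH : ∑ n ∈ Finset.range N, h (1 - Complex.abs (z n)) ≤ H :=
      hsum.sum_le_tsum _ (fun n _ => (hpos _ (hsnIoo n)).le)
    have hcoef : (0:ℝ) ≤ 4 * BP.Cq q * t^(1-q) / h t := by positivity
    calc ∫ θ in (0:ℝ)..2*Real.pi,
        (Complex.abs (deriv (BP.P z N) ((r:ℂ) * Complex.exp ((θ:ℂ) * Complex.I))))^q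
        ≤ ∑ n ∈ Finset.range N, ∫ θ in (0:ℝ)..2*Real.pi,
            (2*(1 - Complex.abs (z n)) / (Complex.abs (1 - (starRingEnd ℂ) (z n) *
              ((r:ℂ) * Complex.exp ((θ:ℂ) * Complex.I))))^2)^q := by
          rw [← hint2]; exact hint1
      _ ≤ (4 * BP.Cq q * t^(1-q) / h t) * ∑ n ∈ Finset.range N, h (1 - Complex.abs (z n)) := by
          rw [← hfactor]; exact hsum_le
      _ ≤ (4 * BP.Cq q * t^(1-q) / h t) * H := mul_le_mul_of_nonneg_left hsumH hcoef
      _ = 4 * BP.Cq q * H * t^(1-q) / h t := by ring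
  -- dominated convergence
  set D := ∑' n, 2 * (1 - Complex.abs (z n)) / t^2 with hDdef
  have hDsummable : Summable fun n => 2 * (1 - Complex.abs (z n)) / t^2 :=
    (hb.mul_left 2).div_const _
  have hDle : ∀ N : ℕ, ∀ θ : ℝ,
      Complex.abs (deriv (BP.P z N) ((r:ℂ) * Complex.exp ((θ:ℂ) * Complex.I))) ≤ D := by
    intro N θ
    refine (BP.abs_deriv_P_le hza (habsw1 θ)).trans ?_
    refine le_trans (Finset.sum_le_sum (fun n _ => ?_)) (hDsummable.sum_le_tsum _ (fun n _ => by
      have := (hsnIoo n).1; positivity))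
    have hA : t ≤ Complex.abs (1 - (starRingEnd ℂ) (z n) *
        ((r:ℂ) * Complex.exp ((θ:ℂ) * Complex.I))) := by
      refine le_trans ?_ (BP.abs_denom_lb)
      rw [habsw θ, htdef]
      nlinarith [hza n, Complex.abs.nonneg (z n)]
    have hsn := (hsnIoo n).1
    apply div_le_div_of_nonneg_left (by linarith) (by positivity) _
    · nlinarith
  have hDCT : Tendsto (fun N => ∫ θ in (0:ℝ)..2*Real.pi,
      (Complex.abs (deriv (BP.P z N) ((r:ℂ) * Complex.exp ((θ:ℂ) * Complex.I))))^q) atTop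
      (𝓝 (∫ θ in (0:ℝ)..2*Real.pi,
        (Complex.abs (deriv (blaschkeProduct z) ((r:ℂ) * Complex.exp ((θ:ℂ) * Complex.I))))^q)) := by
    apply intervalIntegral.tendsto_integral_filter_of_dominated_convergence
      (bound := fun _ => D^q)
    · exact Eventually.of_forall fun N => ((huN_cont N).aestronglyMeasurable)
    · refine Eventually.of_forall fun N => MeasureTheory.ae_of_all _ fun θ _ => ?_
      rw [Real.norm_eq_abs, _root_.abs_of_nonneg (Real.rpow_nonneg (Complex.abs.nonneg _) _)]
      exact Real.rpow_le_rpow (Complex.abs.nonneg _) (hDle N θ) hq0.le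
    · exact intervalIntegrable_const
    · refine MeasureTheory.ae_of_all _ fun θ _ => ?_
      have h1 := BP.tendsto_deriv_P hza hz0 hb (habsw1 θ)
      have h2 : Tendsto (fun x : ℂ => (Complex.abs x)^q) (𝓝 (deriv (blaschkeProduct z)
          ((r:ℂ) * Complex.exp ((θ:ℂ) * Complex.I))))
          (𝓝 ((Complex.abs (deriv (blaschkeProduct z)
            ((r:ℂ) * Complex.exp ((θ:ℂ) * Complex.I))))^q)) :=
        ((Complex.continuous_abs.rpow_const (fun _ => Or.inr hq0.le)).continuousAt).tendsto
      exact h2.comp h1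
  have key_q : ∫ θ in (0:ℝ)..2*Real.pi,
      (Complex.abs (deriv (blaschkeProduct z) ((r:ℂ) * Complex.exp ((θ:ℂ) * Complex.I))))^q
      ≤ 4 * BP.Cq q * H * t^(1-q) / h t :=
    le_of_tendsto hDCT (Eventually.of_forall int_q_P)
  -- p-step
  have hvp_le : ∀ θ ∈ Icc (0:ℝ) (2*Real.pi),
      (Complex.abs (deriv (blaschkeProduct z) ((r:ℂ) * Complex.exp ((θ:ℂ) * Complex.I))))^p
      ≤ (3/t)^(p-q) * (Complex.abs (deriv (blaschkeProduct z)
          ((r:ℂ) * Complex.exp ((θ:ℂ) * Complex.I))))^q := by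
    intro θ _
    set x := Complex.abs (deriv (blaschkeProduct z)
      ((r:ℂ) * Complex.exp ((θ:ℂ) * Complex.I))) with hxdef
    have hx0 : 0 ≤ x := Complex.abs.nonneg _
    have hx3 : x ≤ 3/t := by
      have := BP.abs_deriv_blaschke_le hza hz0 hb (habsw1 θ)
      rwa [habsw θ, ← htdef] at this
    rcases eq_or_lt_of_le hx0 with hx | hx
    · rw [← hx, Real.zero_rpow hp0.ne', Real.zero_rpow hq0.ne', mul_zero]
    · have hxp : x^p = x^(p-q) * x^q := by
        rw [← Real.rpow_add hx]
        ring_nf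
      rw [hxp]
      apply mul_le_mul_of_nonneg_right _ (Real.rpow_nonneg hx0 _)
      exact Real.rpow_le_rpow hx0 hx3 (by linarith)
  have int_p : ∫ θ in (0:ℝ)..2*Real.pi,
      (Complex.abs (deriv (blaschkeProduct z) ((r:ℂ) * Complex.exp ((θ:ℂ) * Complex.I))))^p
      ≤ (3/t)^(p-q) * (4 * BP.Cq q * H * t^(1-q) / h t) := by
    have h1 : ∫ θ in (0:ℝ)..2*Real.pi,
        (Complex.abs (deriv (blaschkeProduct z) ((r:ℂ) * Complex.exp ((θ:ℂ) * Complex.I))))^p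
        ≤ ∫ θ in (0:ℝ)..2*Real.pi, (3/t)^(p-q) * (Complex.abs (deriv (blaschkeProduct z)
            ((r:ℂ) * Complex.exp ((θ:ℂ) * Complex.I))))^q := by
      apply intervalIntegral.integral_mono_on (by positivity) (hvp_cont.intervalIntegrable _ _)
        ((continuous_const.mul hvq_cont).intervalIntegrable _ _) hvp_le
    rw [intervalIntegral.integral_const_mul] at h1
    refine h1.trans ?_
    exact mul_le_mul_of_nonneg_left key_q (Real.rpow_nonneg (by positivity) _)
  -- final arithmetic
  have harith : (3/t)^(p-q) * (4 * BP.Cq q * H * t^(1-q) / h t)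
      = ((3:ℝ)^(p-q) * (4 * BP.Cq q * H)) * (1 / (t^(p-1) * h t)) := by
    have e1 : (3/t)^(p-q) = 3^(p-q) * t^(-(p-q)) := by
      rw [Real.div_rpow (by norm_num) ht0.le, div_eq_mul_inv, ← Real.rpow_neg ht0.le]
    have e2 : t^(-(p-q)) * t^(1-q) = t^(1-p) := by
      rw [← Real.rpow_add ht0]
      ring_nf
    have e3 : t^(1-p) = (t^(p-1))⁻¹ := by
      rw [show (1-p : ℝ) = -(p-1) by ring, Real.rpow_neg ht0.le]
    calc (3/t)^(p-q) * (4 * BP.Cq q * H * t^(1-q) / h t)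
        = (3^(p-q) * (4 * BP.Cq q * H)) * ((t^(-(p-q)) * t^(1-q)) / h t) := by
          rw [e1]; ring
      _ = (3^(p-q) * (4 * BP.Cq q * H)) * ((t^(p-1))⁻¹ / h t) := by rw [e2, e3]
      _ = ((3:ℝ)^(p-q) * (4 * BP.Cq q * H)) * (1 / (t^(p-1) * h t)) := by
          have htp : (0:ℝ) < t^(p-1) := Real.rpow_pos_of_pos ht0 _
          field_simp
  -- conclude
  have hnonneg : 0 ≤ ∫ θ in (0:ℝ)..2*Real.pi,
      (Complex.abs (deriv (blaschkeProduct z) ((r:ℂ) * Complex.exp ((θ:ℂ) * Complex.I))))^p :=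
    intervalIntegral.integral_nonneg h2π (fun u _ => Real.rpow_nonneg (Complex.abs.nonneg _) _)
  have hRHSpos : 0 < 1 / (t^(p-1) * h t) := by
    have htp : (0:ℝ) < t^(p-1) := Real.rpow_pos_of_pos ht0 _
    positivity
  rw [Real.norm_eq_abs, Real.norm_eq_abs, _root_.abs_of_nonneg hnonneg,
    _root_.abs_of_pos hRHSpos]
  calc ∫ θ in (0:ℝ)..2*Real.pi,
      (Complex.abs (deriv (blaschkeProduct z) ((r:ℂ) * Complex.exp ((θ:ℂ) * Complex.I))))^p
      ≤ (3/t)^(p-q) * (4 * BP.Cq q * H * t^(1-q) / h t) := int_p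
    _ = ((3:ℝ)^(p-q) * (4 * BP.Cq q * H)) * (1 / (t^(p-1) * h t)) := harith
end
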